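/- arXiv:1911.00579 — 6 statements merged into one kernel-verified Lean document; each statement's English description precedes it below -/
import Mathlib

section
/- Let C be an n×n real correlation matrix. Then for every n×n real symmetric matrix X, the Hadamard product C ∘ X is majorized by X; that is, the vector of eigenvalues of C ∘ X is majorized by the vector of eigenvalues of X. -/
open Matrix

/-- `v` is majorized by `w`: for every `k`, the sum of the `k` largest entries of `v`
is at most the sum of the `k` largest entries of `w`, with equality for `k = n`.
Stated equivalently: every subset sum of `v` is dominated by some subset sum of `w`
of the same cardinality, and the total sums agree. -/
def VecMajorizedBy {ι : Type*} [Fintype ι] (v w : ι → ℝ) : Prop :=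
  (∀ s : Finset ι, ∃ t : Finset ι, t.card = s.card ∧ ∑ i ∈ s, v i ≤ ∑ i ∈ t, w i) ∧
    ∑ i, v i = ∑ i, w i

/-- `X` is majorized by `Y`: both are (real) symmetric and the eigenvalue vector of `X`
is majorized by the eigenvalue vector of `Y`. -/
def MatMajorizedBy {ι : Type*} [Fintype ι] [DecidableEq ι]
    (X Y : Matrix ι ι ℝ) : Prop :=
  ∃ (hX : X.IsHermitian) (hY : Y.IsHermitian),
    VecMajorizedBy hX.eigenvalues hY.eigenvalues

lemma schur_prod {n : ℕ} {C P : Matrix (Fin n) (Fin n) ℝ}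
    (hC : C.PosSemidef) (hP : P.PosSemidef) : (C ⊙ P).PosSemidef := by
  obtain ⟨B, rfl⟩ : ∃ B : Matrix (Fin n) (Fin n) ℝ, C = Bᴴ * B := by
    classical
    open scoped MatrixOrder in
    obtain ⟨X, hX, -, hXX⟩ :=
      CFC.exists_sqrt_of_isSelfAdjoint_of_quasispectrumRestricts hC.isHermitian
        (QuasispectrumRestricts.nnreal_of_nonneg hC.nonneg)
    exact ⟨X, by rw [← hXX, ← Matrix.star_eq_conjTranspose, hX.star_eq]⟩
  refine .of_dotProduct_mulVec_nonneg ?_ ?_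
  · ext i j
    simp only [conjTranspose_apply, hadamard_apply, star_trivial]
    rw [← hC.1.apply i j, ← hP.1.apply i j]
    simp
  · intro x
    have key : star x ⬝ᵥ (((Bᴴ * B) ⊙ P) *ᵥ x)
        = ∑ i, ∑ j, ∑ k, (B k i * x i) * P i j * (B k j * x j) := by
      simp only [dotProduct, mulVec, hadamard_apply, mul_apply, conjTranspose_apply,
        star_trivial, Finset.mul_sum, Finset.sum_mul]
      exact Finset.sum_congr rfl fun i _ => Finset.sum_congr rfl fun j _ =>
        Finset.sum_congr rfl fun k _ => by ring
    have key2 : ∀ k, ∑ i, ∑ j, (B k i * x i) * P i j * (B k j * x j)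
        = star (fun i => B k i * x i) ⬝ᵥ (P *ᵥ fun i => B k i * x i) := by
      intro k
      simp only [dotProduct, mulVec, star_trivial, Finset.mul_sum]
      exact Finset.sum_congr rfl fun i _ => Finset.sum_congr rfl fun j _ => by ring
    calc (0:ℝ) ≤ ∑ k, star (fun i => B k i * x i) ⬝ᵥ (P *ᵥ fun i => B k i * x i) :=
          Finset.sum_nonneg fun k _ => hP.dotProduct_mulVec_nonneg _
      _ = star x ⬝ᵥ (((Bᴴ * B) ⊙ P) *ᵥ x) := by
          simp_rw [← key2, key]
          rw [Finset.sum_comm]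
          exact Finset.sum_congr rfl fun i _ => Finset.sum_comm
lemma knapsack {n : ℕ} (d m : Fin n → ℝ) (k : ℕ) (hk : k ≤ n)
    (h0 : ∀ i, 0 ≤ m i) (h1 : ∀ i, m i ≤ 1) (hsum : ∑ i, m i = k) :
    ∃ t : Finset (Fin n), t.card = k ∧ ∑ i, d i * m i ≤ ∑ i ∈ t, d i := by
  have hne : ((Finset.univ : Finset (Fin n)).powersetCard k).Nonempty :=
    Finset.powersetCard_nonempty.mpr (by simpa using hk)
  obtain ⟨t, ht, hmax⟩ := Finset.exists_max_image _ (fun t : Finset (Fin n) => ∑ i ∈ t, d i) hne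
  have htcard : t.card = k := (Finset.mem_powersetCard.mp ht).2
  refine ⟨t, htcard, ?_⟩
  rcases Nat.eq_zero_or_pos k with hk0 | hkpos
  · subst hk0
    rw [Finset.card_eq_zero] at htcard
    subst htcard
    have hz : ∀ i ∈ Finset.univ, m i = 0 :=
      (Finset.sum_eq_zero_iff_of_nonneg (fun i _ => h0 i)).mp (by simpa using hsum)
    have : ∑ i, d i * m i = 0 :=
      Finset.sum_eq_zero fun i _ => by rw [hz i (Finset.mem_univ i), mul_zero]
    simp [this]
  -- threshold property
  have thr : ∀ i ∈ t, ∀ j, j ∉ t → d j ≤ d i := by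
    intro i hi j hj
    by_contra h
    push_neg at h
    have hj' : j ∉ t.erase i := fun hmem => hj (Finset.mem_of_mem_erase hmem)
    have hcard' : (insert j (t.erase i)).card = k := by
      rw [Finset.card_insert_of_notMem hj', Finset.card_erase_of_mem hi, htcard]
      omega
    have hmem' : insert j (t.erase i) ∈ (Finset.univ : Finset (Fin n)).powersetCard k :=
      Finset.mem_powersetCard.mpr ⟨Finset.subset_univ _, hcard'⟩
    have hsum' : ∑ x ∈ insert j (t.erase i), d x = ∑ x ∈ t, d x - d i + d j := by
      rw [Finset.sum_insert hj', Finset.sum_erase_eq_sub hi]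
      ring
    have := hmax _ hmem'
    simp only [hsum'] at this
    linarith
  have htne : t.Nonempty := Finset.card_pos.mp (htcard ▸ hkpos)
  obtain ⟨i₀, hi₀, hmin⟩ := Finset.exists_min_image t d htne
  set c := d i₀ with hc
  have e1 : ∑ i ∈ tᶜ, m i = (k : ℝ) - ∑ i ∈ t, m i := by
    have := Finset.sum_add_sum_compl t m
    rw [hsum] at this
    linarith
  have step1 : ∑ i ∈ tᶜ, d i * m i ≤ c * ((k : ℝ) - ∑ i ∈ t, m i) := by
    rw [← e1, Finset.mul_sum]
    exact Finset.sum_le_sum fun i hi =>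
      mul_le_mul_of_nonneg_right (thr i₀ hi₀ i (Finset.mem_compl.mp hi)) (h0 i)
  have step2 : c * ((k : ℝ) - ∑ i ∈ t, m i) = ∑ i ∈ t, c * (1 - m i) := by
    rw [← Finset.mul_sum, Finset.sum_sub_distrib, Finset.sum_const, htcard]
    simp
  have step3 : ∑ i ∈ t, c * (1 - m i) ≤ ∑ i ∈ t, d i * (1 - m i) :=
    Finset.sum_le_sum fun i hi =>
      mul_le_mul_of_nonneg_right (hmin i hi) (by linarith [h1 i])
  have final : ∑ i ∈ t, d i * m i + ∑ i ∈ t, d i * (1 - m i) = ∑ i ∈ t, d i := by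
    rw [← Finset.sum_add_distrib]
    exact Finset.sum_congr rfl fun i _ => by ring
  have split := Finset.sum_add_sum_compl t (fun i => d i * m i)
  linarith

lemma psd_diag_nonneg {n : ℕ} {M : Matrix (Fin n) (Fin n) ℝ} (hM : M.PosSemidef) (i : Fin n) :
    0 ≤ M i i := by
  have := hM.dotProduct_mulVec_nonneg (Pi.single i 1)
  simpa [dotProduct, mulVec, Pi.single_apply, Finset.sum_ite_eq, Finset.sum_ite_eq'] using this

lemma real_spectral {n : ℕ} {A : Matrix (Fin n) (Fin n) ℝ} (hA : A.IsHermitian) :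
    A = (hA.eigenvectorUnitary : Matrix (Fin n) (Fin n) ℝ) * diagonal hA.eigenvalues
      * star (hA.eigenvectorUnitary : Matrix (Fin n) (Fin n) ℝ) := by
  have := hA.spectral_theorem
  simpa [RCLike.ofReal_real_eq_id] using this

lemma trace_eq_sum_eigs {n : ℕ} {A : Matrix (Fin n) (Fin n) ℝ} (hA : A.IsHermitian) :
    A.trace = ∑ i, hA.eigenvalues i := by
  set U := (hA.eigenvectorUnitary : Matrix (Fin n) (Fin n) ℝ)
  have hU : star U * U = 1 := by
    exact Matrix.mem_unitaryGroup_iff'.mp hA.eigenvectorUnitary.2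
  conv_lhs => rw [real_spectral hA]
  rw [trace_mul_cycle, hU, one_mul, trace_diagonal]

/-- If `C` is an `n × n` real correlation matrix (positive semidefinite with unit diagonal),
then for every real symmetric `X`, the Hadamard product `C ⊙ X` is majorized by `X`. -/
theorem correlation_hadamard_majorized {n : ℕ} (C X : Matrix (Fin n) (Fin n) ℝ)
    (hC : C.PosSemidef) (hCdiag : ∀ i, C i i = 1) (hX : X.IsHermitian) :
    MatMajorizedBy (C ⊙ X) X := by
  classical
  have hCsymm : ∀ i j, C j i = C i j := fun i j => by
    simpa using hC.1.apply i j
  have hCX : (C ⊙ X).IsHermitian := by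
    ext i j
    simp only [conjTranspose_apply, hadamard_apply, star_trivial]
    rw [← hC.1.apply i j, ← hX.apply i j]
    simp
  refine ⟨hCX, hX, fun s => ?_, ?_⟩
  · -- subset sums
    set U := (hCX.eigenvectorUnitary : Matrix (Fin n) (Fin n) ℝ) with hUdef
    have hUU : U * star U = 1 := Matrix.mem_unitaryGroup_iff.mp hCX.eigenvectorUnitary.2
    have hUU' : star U * U = 1 := Matrix.mem_unitaryGroup_iff'.mp hCX.eigenvectorUnitary.2
    set lam := hCX.eigenvalues with hlam
    set ind : Fin n → ℝ := fun i => if i ∈ s then 1 else 0 with hind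
    set P := U * diagonal ind * star U with hPdef
    have hindnn : ∀ i, 0 ≤ ind i := fun i => by by_cases h : i ∈ s <;> simp [hind, h]
    have hPpsd : P.PosSemidef := by
      rw [hPdef, Matrix.star_eq_conjTranspose]
      exact (PosSemidef.diagonal (fun i => hindnn i)).mul_mul_conjTranspose_same U
    have hIPpsd : ((1 : Matrix (Fin n) (Fin n) ℝ) - P).PosSemidef := by
      have h1 : (1 : Matrix (Fin n) (Fin n) ℝ) - P
          = U * diagonal (fun i => 1 - ind i) * star U := by
        have hdd : diagonal (fun i => 1 - ind i) = 1 - diagonal ind := by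
          rw [← diagonal_one, diagonal_sub]
        rw [hdd, Matrix.mul_sub, Matrix.sub_mul, Matrix.mul_one, hUU, hPdef]
      rw [h1, Matrix.star_eq_conjTranspose]
      exact (PosSemidef.diagonal (fun i => by
        by_cases h : i ∈ s <;> simp [hind, h])).mul_mul_conjTranspose_same U
    have hspec : C ⊙ X = U * diagonal lam * star U := real_spectral hCX
    have hsum_eq : ∑ i ∈ s, lam i = (P * (C ⊙ X)).trace := by
      rw [hspec, hPdef]
      have key : U * diagonal ind * star U * (U * diagonal lam * star U)
          = U * (diagonal ind * diagonal lam) * star U := by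
        simp only [mul_assoc]
        rw [← mul_assoc (star U) U, hUU', one_mul]
      rw [key, trace_mul_cycle, hUU', one_mul, diagonal_mul_diagonal, trace_diagonal]
      simp [hind, ite_mul]
    set M := C ⊙ P with hMdef
    have hMpsd : M.PosSemidef := schur_prod hC hPpsd
    have hIMpsd : ((1 : Matrix (Fin n) (Fin n) ℝ) - M).PosSemidef := by
      have h1 : (1 : Matrix (Fin n) (Fin n) ℝ) - M = C ⊙ (1 - P) := by
        ext i j
        by_cases h : i = j <;>
          simp [hMdef, hadamard_apply, one_apply, h, hCdiag, mul_sub]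
      rw [h1]
      exact schur_prod hC hIPpsd
    have htrP : P.trace = (s.card : ℝ) := by
      rw [hPdef, trace_mul_cycle, hUU', one_mul, trace_diagonal]
      simp [hind]
    have htrM : M.trace = (s.card : ℝ) := by
      have h1 : M.trace = ∑ i, P i i := by
        simp [hMdef, Matrix.trace, Matrix.diag, hadamard_apply, hCdiag]
      rw [h1]
      simpa [Matrix.trace, Matrix.diag] using htrP
    have htr_eq : (M * X).trace = (P * (C ⊙ X)).trace := by
      simp only [Matrix.trace, Matrix.diag, Matrix.mul_apply, hMdef, hadamard_apply]
      refine Finset.sum_congr rfl fun i _ => Finset.sum_congr rfl fun j _ => ?_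
      rw [hCsymm i j]
      ring
    set V := (hX.eigenvectorUnitary : Matrix (Fin n) (Fin n) ℝ) with hVdef
    have hVV : V * star V = 1 := Matrix.mem_unitaryGroup_iff.mp hX.eigenvectorUnitary.2
    have hVV' : star V * V = 1 := Matrix.mem_unitaryGroup_iff'.mp hX.eigenvectorUnitary.2
    set mu := hX.eigenvalues with hmu
    have hXspec : X = V * diagonal mu * star V := real_spectral hX
    set N := star V * M * V with hNdef
    have hNpsd : N.PosSemidef := by
      rw [hNdef, Matrix.star_eq_conjTranspose]
      exact hMpsd.conjTranspose_mul_mul_same V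
    have hNdiag0 : ∀ i, 0 ≤ N i i := psd_diag_nonneg hNpsd
    have hNdiag1 : ∀ i, N i i ≤ 1 := by
      intro i
      have h2 : (star V * (1 - M) * V).PosSemidef := by
        rw [Matrix.star_eq_conjTranspose]
        exact hIMpsd.conjTranspose_mul_mul_same V
      have h3 : star V * (1 - M) * V = 1 - N := by
        rw [Matrix.mul_sub, Matrix.sub_mul, Matrix.mul_one, hVV', hNdef]
      have h4 := psd_diag_nonneg h2 i
      rw [h3] at h4
      simpa [Matrix.sub_apply, one_apply] using h4
    have hNtr : ∑ i, N i i = (s.card : ℝ) := by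
      have h1 : N.trace = M.trace := by
        rw [hNdef, trace_mul_cycle, hVV, one_mul]
      have h2 : ∑ i, N i i = N.trace := by simp [Matrix.trace, Matrix.diag]
      rw [h2, h1, htrM]
    have htrMX : (M * X).trace = ∑ i, N i i * mu i := by
      conv_lhs => rw [hXspec]
      rw [show M * (V * diagonal mu * star V) = M * V * diagonal mu * star V by
        simp [mul_assoc]]
      rw [trace_mul_cycle, ← mul_assoc]
      simp [Matrix.trace, Matrix.diag, mul_diagonal, hNdef]
    obtain ⟨t, htc, hle⟩ := knapsack mu (fun i => N i i) s.card
      (by simpa using s.card_le_univ) hNdiag0 hNdiag1 hNtr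
    refine ⟨t, htc, ?_⟩
    calc ∑ i ∈ s, hCX.eigenvalues i = (P * (C ⊙ X)).trace := hsum_eq
      _ = (M * X).trace := htr_eq.symm
      _ = ∑ i, N i i * mu i := htrMX
      _ = ∑ i, mu i * N i i := by simp_rw [mul_comm]
      _ ≤ ∑ i ∈ t, mu i := hle
  · rw [← trace_eq_sum_eigs hCX, ← trace_eq_sum_eigs hX]
    simp [Matrix.trace, Matrix.diag, hadamard_apply, hCdiag]
end

section
/- Let Φ be an ℝ-linear map on the space of n×n real symmetric matrices. Then Φ is doubly stochastic — i.e., Φ maps positive semidefinite matrices to positive semidefinite matrices, Φ(I) = I, and tr(Φ(X)) = tr(X) for all symmetric X — if and only if Φ(X) is majorized by X for every n×n real symmetric matrix X. -/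
open Matrix

section Helpers

variable {n : ℕ}

private lemma exists_subset_sum_le (c lam : Fin n → ℝ) (k : ℕ) (hk : k ≤ n)
    (hc0 : ∀ i, 0 ≤ c i) (hc1 : ∀ i, c i ≤ 1) (hsum : ∑ i, c i = (k : ℝ)) :
    ∃ t : Finset (Fin n), t.card = k ∧ ∑ i, c i * lam i ≤ ∑ i ∈ t, lam i := by
  obtain ⟨t0, ht0sub, ht0card⟩ :=
    Finset.exists_subset_card_eq (s := (Finset.univ : Finset (Fin n))) (by simpa using hk)
  have hne : (Finset.univ.powersetCard k).Nonempty :=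
    ⟨t0, Finset.mem_powersetCard.mpr ⟨ht0sub, ht0card⟩⟩
  obtain ⟨t, htmem, htmax⟩ :=
    Finset.exists_max_image (Finset.univ.powersetCard k) (fun t => ∑ i ∈ t, lam i) hne
  have htcard : t.card = k := (Finset.mem_powersetCard.mp htmem).2
  refine ⟨t, htcard, ?_⟩
  rcases Nat.eq_zero_or_pos k with rfl | hkpos
  · have hall : ∀ i ∈ (Finset.univ : Finset (Fin n)), c i = 0 :=
      (Finset.sum_eq_zero_iff_of_nonneg (fun i _ => hc0 i)).mp (by simpa using hsum)
    have ht : t = ∅ := Finset.card_eq_zero.mp htcard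
    simp only [ht, Finset.sum_empty]
    have : ∑ i, c i * lam i = 0 := Finset.sum_eq_zero fun i _ => by
      rw [hall i (Finset.mem_univ i), zero_mul]
    linarith
  · have htne : t.Nonempty := Finset.card_pos.mp (htcard ▸ hkpos)
    set m : ℝ := t.inf' htne lam with hm
    have hsep1 : ∀ i ∈ t, m ≤ lam i := fun i hi => Finset.inf'_le lam hi
    obtain ⟨i0, hi0t, hi0⟩ := Finset.exists_mem_eq_inf' htne lam
    have hsep2 : ∀ j, j ∉ t → lam j ≤ m := by
      intro j hj
      by_contra hlt
      push_neg at hlt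
      have hjmem : j ∉ t.erase i0 := fun h => hj (Finset.mem_of_mem_erase h)
      set t' := insert j (t.erase i0) with ht'
      have ht'card : t'.card = k := by
        rw [ht', Finset.card_insert_of_notMem hjmem, Finset.card_erase_of_mem hi0t, htcard]
        omega
      have ht'mem : t' ∈ Finset.univ.powersetCard k :=
        Finset.mem_powersetCard.mpr ⟨Finset.subset_univ _, ht'card⟩
      have hsum' : ∑ i ∈ t', lam i = lam j + (∑ i ∈ t, lam i - lam i0) := by
        rw [ht', Finset.sum_insert hjmem, Finset.sum_erase_eq_sub hi0t]
      have := htmax t' ht'mem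
      simp only [hsum'] at this
      rw [hm] at hlt
      rw [hi0] at *
      linarith
    have hsplit : ∑ i ∈ t, c i + ∑ i ∈ tᶜ, c i = (k : ℝ) := by
      rw [Finset.sum_add_sum_compl]; exact hsum
    calc ∑ i, c i * lam i
        = ∑ i ∈ t, c i * lam i + ∑ i ∈ tᶜ, c i * lam i :=
          (Finset.sum_add_sum_compl t _).symm
      _ ≤ ∑ i ∈ t, (lam i - (1 - c i) * m) + ∑ i ∈ tᶜ, c i * m := by
          apply add_le_add
          · refine Finset.sum_le_sum fun i hi => ?_
            have h1 := hsep1 i hi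
            have h2 := hc1 i
            nlinarith
          · refine Finset.sum_le_sum fun i hi => ?_
            have := hsep2 i (Finset.mem_compl.mp hi)
            exact mul_le_mul_of_nonneg_left this (hc0 i)
      _ = ∑ i ∈ t, lam i := by
          rw [Finset.sum_sub_distrib]
          have e1 : ∑ i ∈ t, (1 - c i) * m = (k : ℝ) * m - (∑ i ∈ t, c i) * m := by
            simp only [sub_mul, one_mul]
            rw [Finset.sum_sub_distrib, Finset.sum_const, htcard, Finset.sum_mul]
            simp [nsmul_eq_mul]
          have e2 : ∑ i ∈ tᶜ, c i * m = (∑ i ∈ tᶜ, c i) * m := by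
            rw [Finset.sum_mul]
          rw [e1, e2]
          have : ∑ i ∈ tᶜ, c i = (k:ℝ) - ∑ i ∈ t, c i := by linarith
          rw [this]; ring

private lemma vecMaj_of_DS (D : Fin n → Fin n → ℝ) (lam : Fin n → ℝ)
    (h0 : ∀ j i, 0 ≤ D j i) (hrow : ∀ j, ∑ i, D j i = 1) (hcol : ∀ i, ∑ j, D j i = 1) :
    VecMajorizedBy (fun j => ∑ i, D j i * lam i) lam := by
  constructor
  · intro s
    set c : Fin n → ℝ := fun i => ∑ j ∈ s, D j i with hc
    have hc0 : ∀ i, 0 ≤ c i := fun i => Finset.sum_nonneg fun j _ => h0 j i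
    have hc1 : ∀ i, c i ≤ 1 := fun i => by
      calc c i ≤ ∑ j, D j i :=
            Finset.sum_le_sum_of_subset_of_nonneg (Finset.subset_univ s)
              (fun j _ _ => h0 j i)
        _ = 1 := hcol i
    have hcsum : ∑ i, c i = (s.card : ℝ) := by
      rw [Finset.sum_comm]
      simp [hrow]
    obtain ⟨t, ht, hle⟩ :=
      exists_subset_sum_le c lam s.card (by simpa using s.card_le_univ) hc0 hc1 hcsum
    refine ⟨t, ht, ?_⟩
    calc ∑ j ∈ s, ∑ i, D j i * lam i = ∑ i, c i * lam i := by
          rw [Finset.sum_comm]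
          simp [hc, Finset.sum_mul]
      _ ≤ _ := hle
  · calc ∑ j, ∑ i, D j i * lam i = ∑ i, (∑ j, D j i) * lam i := by
          rw [Finset.sum_comm]; simp [Finset.sum_mul]
      _ = ∑ i, lam i := by simp [hcol]

private lemma trace_eq_sum_ev {A : Matrix (Fin n) (Fin n) ℝ} (hA : A.IsHermitian) :
    A.trace = ∑ i, hA.eigenvalues i := by
  conv_lhs => rw [hA.spectral_theorem]
  rw [Unitary.conjStarAlgAut_apply, Matrix.trace_mul_cycle,
    (Matrix.mem_unitaryGroup_iff'.mp hA.eigenvectorUnitary.2), one_mul]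
  simp [Matrix.trace_diagonal]

private lemma eq_one_of_ev_one {A : Matrix (Fin n) (Fin n) ℝ} (hA : A.IsHermitian)
    (h : ∀ i, hA.eigenvalues i = 1) : A = 1 := by
  have := hA.spectral_theorem
  rw [show Matrix.diagonal (RCLike.ofReal ∘ hA.eigenvalues) = (1 : Matrix (Fin n) (Fin n) ℝ) by
    ext i j; simp [Matrix.diagonal, h, Matrix.one_apply]] at this
  rw [this, Unitary.conjStarAlgAut_apply, mul_one, (Matrix.mem_unitaryGroup_iff.mp hA.eigenvectorUnitary.2)]

private lemma ev_one {A : Matrix (Fin n) (Fin n) ℝ} (hA : A.IsHermitian)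
    (h : A = 1) : ∀ i, hA.eigenvalues i = 1 := by
  subst h
  intro i
  have hd : star (hA.eigenvectorUnitary : Matrix (Fin n) (Fin n) ℝ) * 1 *
      (hA.eigenvectorUnitary : Matrix (Fin n) (Fin n) ℝ) =
      Matrix.diagonal (RCLike.ofReal ∘ hA.eigenvalues) := by
    have hs := hA.spectral_theorem
    rw [Unitary.conjStarAlgAut_apply] at hs
    have hs' : star (hA.eigenvectorUnitary : Matrix (Fin n) (Fin n) ℝ) * 1 *
        (hA.eigenvectorUnitary : Matrix (Fin n) (Fin n) ℝ) =
        star (hA.eigenvectorUnitary : Matrix (Fin n) (Fin n) ℝ) *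
          ((hA.eigenvectorUnitary : Matrix (Fin n) (Fin n) ℝ) *
            Matrix.diagonal (RCLike.ofReal ∘ hA.eigenvalues) *
            star (hA.eigenvectorUnitary : Matrix (Fin n) (Fin n) ℝ)) *
        (hA.eigenvectorUnitary : Matrix (Fin n) (Fin n) ℝ) := by
      rw [← hs]
    rw [hs']
    have h1 := Matrix.mem_unitaryGroup_iff'.mp hA.eigenvectorUnitary.2
    simp only [← mul_assoc, h1, one_mul]
    rw [mul_assoc, h1, mul_one]
  rw [mul_one, (Matrix.mem_unitaryGroup_iff'.mp hA.eigenvectorUnitary.2)] at hd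
  have := congrFun (congrFun hd.symm i) i
  simpa [Matrix.diagonal, Matrix.one_apply] using this

private lemma vecMulVec_hermitian (u : Fin n → ℝ) : (vecMulVec u u).IsHermitian := by
  ext a b; simp [Matrix.conjTranspose_apply, vecMulVec_apply, mul_comm]

private lemma vecMulVec_posSemidef (u : Fin n → ℝ) : (vecMulVec u u).PosSemidef := by
  refine .of_dotProduct_mulVec_nonneg (vecMulVec_hermitian u) fun x => ?_
  have : star x ⬝ᵥ (vecMulVec u u *ᵥ x) = (u ⬝ᵥ x) * (u ⬝ᵥ x) := by
    simp [dotProduct, mulVec, vecMulVec_apply, Finset.sum_mul, Finset.mul_sum]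
    rw [Finset.sum_comm]
    apply Finset.sum_congr rfl; intro i _
    apply Finset.sum_congr rfl; intro j _
    ring
  rw [this]
  simpa using mul_self_nonneg (u ⬝ᵥ x)

private lemma spectral_sum {A : Matrix (Fin n) (Fin n) ℝ} (hA : A.IsHermitian) :
    A = ∑ i, hA.eigenvalues i •
      vecMulVec (fun a => (hA.eigenvectorUnitary : Matrix (Fin n) (Fin n) ℝ) a i)
        (fun a => (hA.eigenvectorUnitary : Matrix (Fin n) (Fin n) ℝ) a i) := by
  conv_lhs => rw [hA.spectral_theorem]
  ext a b
  simp [Matrix.mul_apply, Matrix.diagonal_apply, Matrix.sum_apply, vecMulVec_apply,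
    Finset.sum_ite_eq, Matrix.conjTranspose_apply, mul_comm, mul_assoc, mul_left_comm]

private lemma sum_proj_eq_one {U : Matrix (Fin n) (Fin n) ℝ}
    (hU : U ∈ Matrix.unitaryGroup (Fin n) ℝ) :
    ∑ i, vecMulVec (fun a => U a i) (fun a => U a i) = (1 : Matrix (Fin n) (Fin n) ℝ) := by
  have h := Matrix.mem_unitaryGroup_iff.mp hU
  ext a b
  have := congrFun (congrFun h a) b
  simp only [Matrix.mul_apply, Matrix.star_apply, star_trivial] at this
  simpa [Matrix.sum_apply, vecMulVec_apply] using this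

private lemma sum_quad_eq_trace {U : Matrix (Fin n) (Fin n) ℝ}
    (hU : U ∈ Matrix.unitaryGroup (Fin n) ℝ) (M : Matrix (Fin n) (Fin n) ℝ) :
    ∑ j, (fun a => U a j) ⬝ᵥ (M *ᵥ fun a => U a j) = M.trace := by
  have key : ∀ j, (fun a => U a j) ⬝ᵥ (M *ᵥ fun a => U a j) = (star U * M * U) j j := by
    intro j
    simp only [Matrix.mul_apply, dotProduct, mulVec, Finset.mul_sum, Finset.sum_mul,
      Matrix.star_apply, star_trivial]
    rw [Finset.sum_comm]
    refine Finset.sum_congr rfl fun x _ => Finset.sum_congr rfl fun i _ => by ring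
  simp only [key]
  have : (star U * M * U).trace = M.trace := by
    rw [Matrix.trace_mul_cycle, Matrix.mem_unitaryGroup_iff.mp hU, one_mul]
  simpa [Matrix.trace] using this

private lemma herm_of_mem {A : Matrix (Fin n) (Fin n) ℝ}
    (h : A ∈ selfAdjoint (Matrix (Fin n) (Fin n) ℝ)) : A.IsHermitian := by
  rw [selfAdjoint.mem_iff, Matrix.star_eq_conjTranspose] at h
  exact h

private lemma mem_of_herm {A : Matrix (Fin n) (Fin n) ℝ}
    (h : A.IsHermitian) : A ∈ selfAdjoint (Matrix (Fin n) (Fin n) ℝ) := by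
  rw [selfAdjoint.mem_iff, Matrix.star_eq_conjTranspose]
  exact h

private lemma coe_sum (s : Finset (Fin n)) (f : Fin n → selfAdjoint (Matrix (Fin n) (Fin n) ℝ)) :
    ((∑ i ∈ s, f i : selfAdjoint (Matrix (Fin n) (Fin n) ℝ)) : Matrix (Fin n) (Fin n) ℝ)
      = ∑ i ∈ s, (f i : Matrix (Fin n) (Fin n) ℝ) :=
  map_sum (AddSubgroupClass.subtype _) f s

private lemma sum_mulVec' (s : Finset (Fin n)) (M : Fin n → Matrix (Fin n) (Fin n) ℝ)
    (v : Fin n → ℝ) : (∑ i ∈ s, M i) *ᵥ v = ∑ i ∈ s, M i *ᵥ v :=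
  map_sum (Matrix.mulVec.addMonoidHomLeft v) M s

private lemma dot_sum (v : Fin n → ℝ) (M : Fin n → Matrix (Fin n) (Fin n) ℝ) :
    v ⬝ᵥ ((∑ i, M i) *ᵥ v) = ∑ i, v ⬝ᵥ (M i *ᵥ v) := by
  rw [sum_mulVec']
  simp [dotProduct, Finset.sum_apply, Finset.mul_sum]
  rw [Finset.sum_comm]

private lemma dot_sum_smul (v : Fin n → ℝ) (c : Fin n → ℝ)
    (M : Fin n → Matrix (Fin n) (Fin n) ℝ) :
    v ⬝ᵥ ((∑ i, c i • M i) *ᵥ v) = ∑ i, c i * (v ⬝ᵥ (M i *ᵥ v)) := by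
  rw [sum_mulVec']
  simp only [Matrix.smul_mulVec]
  simp [dotProduct, Finset.sum_apply, Finset.mul_sum, Pi.smul_apply, smul_eq_mul]
  rw [Finset.sum_comm]
  refine Finset.sum_congr rfl fun i _ => Finset.sum_congr rfl fun a _ => by ring

end Helpers

/-- A linear map `Φ` on the space of `n × n` real symmetric matrices is doubly stochastic
(positive, unital, trace preserving) if and only if `Φ X` is majorized by `X` for all
symmetric `X`. -/
theorem doublyStochastic_iff_majorized {n : ℕ}
    (Φ : selfAdjoint (Matrix (Fin n) (Fin n) ℝ) →ₗ[ℝ] selfAdjoint (Matrix (Fin n) (Fin n) ℝ)) :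
    ((∀ X : selfAdjoint (Matrix (Fin n) (Fin n) ℝ),
        (X : Matrix (Fin n) (Fin n) ℝ).PosSemidef → (Φ X : Matrix (Fin n) (Fin n) ℝ).PosSemidef) ∧
      (Φ 1 : Matrix (Fin n) (Fin n) ℝ) = 1 ∧
      (∀ X : selfAdjoint (Matrix (Fin n) (Fin n) ℝ),
        (Φ X : Matrix (Fin n) (Fin n) ℝ).trace = (X : Matrix (Fin n) (Fin n) ℝ).trace)) ↔
    ∀ X : selfAdjoint (Matrix (Fin n) (Fin n) ℝ),
      MatMajorizedBy (Φ X : Matrix (Fin n) (Fin n) ℝ) (X : Matrix (Fin n) (Fin n) ℝ) := by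
  constructor
  · rintro ⟨hpos, huni, htr⟩ X
    have hA : (X : Matrix (Fin n) (Fin n) ℝ).IsHermitian := herm_of_mem X.prop
    have hB : (Φ X : Matrix (Fin n) (Fin n) ℝ).IsHermitian := herm_of_mem (Φ X).prop
    refine ⟨hB, hA, ?_⟩
    set U : Matrix (Fin n) (Fin n) ℝ := (hA.eigenvectorUnitary : Matrix (Fin n) (Fin n) ℝ) with hUdef
    set V : Matrix (Fin n) (Fin n) ℝ := (hB.eigenvectorUnitary : Matrix (Fin n) (Fin n) ℝ) with hVdef
    set P : Fin n → selfAdjoint (Matrix (Fin n) (Fin n) ℝ) :=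
      fun i => ⟨vecMulVec (fun a => U a i) (fun a => U a i),
        mem_of_herm (vecMulVec_hermitian _)⟩ with hPdef
    have hXsum : X = ∑ i, hA.eigenvalues i • P i := by
      apply Subtype.ext
      have : ((∑ i, hA.eigenvalues i • P i :
          selfAdjoint (Matrix (Fin n) (Fin n) ℝ)) : Matrix (Fin n) (Fin n) ℝ)
          = ∑ i, hA.eigenvalues i • (P i : Matrix (Fin n) (Fin n) ℝ) := by
        rw [coe_sum]
        exact Finset.sum_congr rfl fun i _ => selfAdjoint.val_smul _ _
      rw [this]
      exact spectral_sum hA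
    have hPhiXsum : (Φ X : Matrix (Fin n) (Fin n) ℝ)
        = ∑ i, hA.eigenvalues i • (Φ (P i) : Matrix (Fin n) (Fin n) ℝ) := by
      conv_lhs => rw [hXsum]
      rw [map_sum, coe_sum]
      exact Finset.sum_congr rfl fun i _ => by rw [_root_.map_smul, selfAdjoint.val_smul]
    set D : Fin n → Fin n → ℝ :=
      fun j i => (fun a => V a j) ⬝ᵥ ((Φ (P i) : Matrix (Fin n) (Fin n) ℝ) *ᵥ (fun a => V a j))
      with hDdef
    have hD0 : ∀ j i, 0 ≤ D j i := by
      intro j i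
      have hpsd : (Φ (P i) : Matrix (Fin n) (Fin n) ℝ).PosSemidef :=
        hpos (P i) (vecMulVec_posSemidef _)
      have := hpsd.dotProduct_mulVec_nonneg (fun a => V a j)
      simpa [hDdef, star_trivial] using this
    have hrow : ∀ j, ∑ i, D j i = 1 := by
      intro j
      have hPsum : (∑ i, P i) = (1 : selfAdjoint (Matrix (Fin n) (Fin n) ℝ)) := by
        apply Subtype.ext
        rw [coe_sum, selfAdjoint.val_one]
        exact sum_proj_eq_one hA.eigenvectorUnitary.2
      have hsumP : ∑ i, (Φ (P i) : Matrix (Fin n) (Fin n) ℝ) = 1 := by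
        rw [← coe_sum, ← map_sum, hPsum, huni]
      have hlin : ∑ i, D j i
          = (fun a => V a j) ⬝ᵥ ((∑ i, (Φ (P i) : Matrix (Fin n) (Fin n) ℝ)) *ᵥ
              (fun a => V a j)) :=
        (dot_sum _ _).symm
      rw [hlin, hsumP, one_mulVec]
      have := congrFun (congrFun (Matrix.mem_unitaryGroup_iff'.mp hB.eigenvectorUnitary.2) j) j
      simpa [hVdef, Matrix.mul_apply, dotProduct, Matrix.one_apply, Matrix.star_apply] using this
    have hcol : ∀ i, ∑ j, D j i = 1 := by
      intro i
      have h1 : ∑ j, D j i = (Φ (P i) : Matrix (Fin n) (Fin n) ℝ).trace :=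
        sum_quad_eq_trace hB.eigenvectorUnitary.2 _
      rw [h1, htr (P i)]
      have := congrFun (congrFun (Matrix.mem_unitaryGroup_iff'.mp hA.eigenvectorUnitary.2) i) i
      simp only [Matrix.mul_apply, Matrix.star_apply, star_trivial, Matrix.one_apply,
        if_pos rfl] at this
      simpa [hUdef, Matrix.trace, Matrix.diag, hPdef, vecMulVec_apply] using this
    have hμ : hB.eigenvalues = fun j => ∑ i, D j i * hA.eigenvalues i := by
      funext j
      have hbasis : (fun a => V a j) = ⇑(hB.eigenvectorBasis j) := by
        funext a
        simp [hVdef]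
      have hev := hB.eigenvalues_eq j
      simp only [RCLike.re_to_real] at hev
      rw [← hbasis, star_trivial] at hev
      rw [hev, hPhiXsum, dot_sum_smul]
      exact Finset.sum_congr rfl fun i _ => by rw [mul_comm]
    rw [hμ]
    exact vecMaj_of_DS D hA.eigenvalues hD0 hrow hcol
  · intro h
    refine ⟨?_, ?_, ?_⟩
    · intro X hXpsd
      obtain ⟨hB, hA, hmaj⟩ := h X
      have hlam : ∀ i, 0 ≤ hA.eigenvalues i := hXpsd.eigenvalues_nonneg
      refine hB.posSemidef_iff_eigenvalues_nonneg.mpr fun i => show (0 : ℝ) ≤ hB.eigenvalues i from ?_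
      obtain ⟨t, htcard, hle⟩ := hmaj.1 ({i}ᶜ)
      have h1 : ∑ j ∈ t, hA.eigenvalues j ≤ ∑ j, hA.eigenvalues j :=
        Finset.sum_le_sum_of_subset_of_nonneg (Finset.subset_univ t)
          (fun j _ _ => hlam j)
      have h2 : ∑ j ∈ ({i}ᶜ : Finset (Fin n)), hB.eigenvalues j + hB.eigenvalues i
          = ∑ j, hB.eigenvalues j := by
        rw [← Finset.sum_compl_add_sum ({i} : Finset (Fin n))]
        simp
      have h3 := hmaj.2
      linarith
    · obtain ⟨hB, hA, hmaj⟩ := h 1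
      have hone : ((1 : selfAdjoint (Matrix (Fin n) (Fin n) ℝ)) :
          Matrix (Fin n) (Fin n) ℝ) = 1 := selfAdjoint.val_one
      have hw : ∀ i, hA.eigenvalues i = 1 := ev_one hA hone
      refine eq_one_of_ev_one hB fun i => ?_
      have hle1 : hB.eigenvalues i ≤ 1 := by
        obtain ⟨t, htcard, hle⟩ := hmaj.1 {i}
        simp only [Finset.card_singleton] at htcard
        have : ∑ j ∈ t, hA.eigenvalues j = 1 := by
          rw [Finset.sum_congr rfl fun j _ => hw j, Finset.sum_const, htcard]
          simp
        simpa [this] using hle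
      have hge1 : 1 ≤ hB.eigenvalues i := by
        obtain ⟨t, htcard, hle⟩ := hmaj.1 ({i}ᶜ)
        have hcardc : ({i}ᶜ : Finset (Fin n)).card = n - 1 := by
          rw [Finset.card_compl]
          simp
        have htval : ∑ j ∈ t, hA.eigenvalues j = ((n : ℝ) - 1) := by
          rw [Finset.sum_congr rfl fun j _ => hw j, Finset.sum_const, htcard, hcardc]
          have hn : 1 ≤ n := Nat.one_le_iff_ne_zero.mpr (fun h => by subst h; exact i.elim0)
          simp [Nat.cast_sub hn]
        have hsum2 : ∑ j ∈ ({i}ᶜ : Finset (Fin n)), hB.eigenvalues j + hB.eigenvalues i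
            = ∑ j, hB.eigenvalues j := by
          rw [← Finset.sum_compl_add_sum ({i} : Finset (Fin n))]
          simp
        have htot : ∑ j, hB.eigenvalues j = (n : ℝ) := by
          rw [hmaj.2, Finset.sum_congr rfl fun j _ => hw j, Finset.sum_const]
          simp
        rw [htval] at hle
        linarith
      linarith
    · intro X
      obtain ⟨hB, hA, hmaj⟩ := h X
      rw [trace_eq_sum_ev hB, trace_eq_sum_ev hA, hmaj.2]
end

section
/- Let X and Y be n×n real symmetric matrices such that X is majorized by Y. Then there exist finitely many n×n real orthogonal matrices U_1,…,U_m and nonnegative real numbers t_1,…,t_m with t_1 + ⋯ + t_m = 1 such that X = ∑_{i=1}^m t_i U_i Y U_iᵀ. -/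
open Matrix

open Finset

private lemma strictMono_fin_le {k n : ℕ} (f : Fin k → Fin n) (hf : StrictMono f) :
    ∀ m (h : m < k), m ≤ (f ⟨m, h⟩ : ℕ) := by
  intro m
  induction m with
  | zero => intro h; exact Nat.zero_le _
  | succ m ih =>
    intro h
    have h' : m < k := Nat.lt_of_succ_lt h
    have h1 := ih h'
    have h2 : f ⟨m, h'⟩ < f ⟨m + 1, h⟩ := hf (by simp [Fin.lt_def])
    rw [Fin.lt_def] at h2
    omega

/-- extended function on ℕ -/
noncomputable def ext0 {n : ℕ} (b : Fin n → ℝ) (j : ℕ) : ℝ :=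
  if h : j < n then b ⟨j, h⟩ else 0

lemma sum_le_topk {n : ℕ} (b : Fin n → ℝ) (hb : Antitone b) (u : Finset (Fin n)) :
    ∑ j ∈ u, b j ≤ ∑ j ∈ Finset.range u.card, ext0 b j := by
  classical
  have hk : u.card ≤ n := u.card_le_univ.trans_eq (by simp)
  set k := u.card with hkdef
  let e := u.orderIsoOfFin rfl
  have h1 : ∑ j ∈ u, b j = ∑ i : Fin k, b (e i) := by
    rw [← Finset.sum_coe_sort u b]
    exact (Equiv.sum_comp e.toEquiv (fun x => b x)).symm
  have h2 : ∑ j ∈ Finset.range k, ext0 b j = ∑ i : Fin k, ext0 b i := by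
    rw [Finset.sum_range fun j => ext0 b j]
  rw [h1, h2]
  apply Finset.sum_le_sum
  intro i _
  have hmono : StrictMono fun i : Fin k => (e i : Fin n) := fun a b hab => by
    exact e.strictMono hab
  have hle : (i : ℕ) ≤ ((e i : Fin n) : ℕ) := by
    have := strictMono_fin_le _ hmono i.1 i.2
    simpa using this
  have hin : (i : ℕ) < n := lt_of_lt_of_le i.2 hk
  have : b (e i) ≤ b ⟨i, hin⟩ := hb (by rw [Fin.le_def]; simpa using hle)
  simpa [ext0, hin] using this

/-- key rearrangement lemma: for any vector `c`, the pairing of `c` with `v` is at most the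
pairing of `c` with some permutation of `w`. -/
lemma exists_perm_dot_le {n : ℕ} {v w : Fin n → ℝ} (h : VecMajorizedBy v w) (c : Fin n → ℝ) :
    ∃ σ : Equiv.Perm (Fin n), ∑ i, c i * v i ≤ ∑ i, c i * w (σ i) := by
  classical
  obtain ⟨hmaj, htot⟩ := h
  -- sort c decreasingly via τ, w decreasingly via ρ
  obtain ⟨τ, hτ⟩ : ∃ τ : Equiv.Perm (Fin n), Antitone (c ∘ τ) := by
    refine ⟨Tuple.sort (fun i => -c i), ?_⟩
    have := Tuple.monotone_sort (fun i => -c i)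
    intro a b hab
    have := this hab
    simp only [Function.comp_apply] at this ⊢
    linarith
  obtain ⟨ρ, hρ⟩ : ∃ ρ : Equiv.Perm (Fin n), Antitone (w ∘ ρ) := by
    refine ⟨Tuple.sort (fun i => -w i), ?_⟩
    have := Tuple.monotone_sort (fun i => -w i)
    intro a b hab
    have := this hab
    simp only [Function.comp_apply] at this ⊢
    linarith
  set d : ℕ → ℝ := ext0 (c ∘ τ) with hd
  set a : ℕ → ℝ := ext0 (v ∘ τ) with ha
  set b : ℕ → ℝ := ext0 (w ∘ ρ) with hb
  -- partial sums inequality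
  have hA : ∀ k, k ≤ n → ∑ j ∈ range k, a j ≤ ∑ j ∈ range k, b j := by
    intro k hkn
    -- the set {τ j : j < k}
    let s : Finset (Fin n) := (Finset.univ : Finset (Fin k)).image (fun i => τ (Fin.castLE hkn i))
    have hginj : Function.Injective (fun i : Fin k => τ (Fin.castLE hkn i)) :=
      fun x y hxy => Fin.castLE_injective hkn (τ.injective hxy)
    have hscard : s.card = k := by
      rw [Finset.card_image_of_injective _ hginj, Finset.card_univ, Fintype.card_fin]
    have h1 : ∑ j ∈ range k, a j = ∑ i ∈ s, v i := by
      rw [Finset.sum_image (fun x _ y _ hxy => hginj hxy)]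
      rw [Finset.sum_range fun j => a j]
      apply Finset.sum_congr rfl
      intro i _
      have hmn : (i : ℕ) < n := lt_of_lt_of_le i.2 hkn
      simp [ha, ext0, hmn, Fin.castLE]
    obtain ⟨t, htc, hts⟩ := hmaj s
    have h2 : ∑ i ∈ t, w i = ∑ j ∈ t.image ρ.symm, (w ∘ ρ) j := by
      rw [Finset.sum_image (fun x _ y _ hxy => ρ.symm.injective hxy)]
      simp
    have h3 : ∑ j ∈ t.image ρ.symm, (w ∘ ρ) j ≤ ∑ j ∈ range ((t.image ρ.symm).card), b j :=
      sum_le_topk _ hρ _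
    rw [Finset.card_image_of_injective _ ρ.symm.injective, htc, hscard] at h3
    calc ∑ j ∈ range k, a j = ∑ i ∈ s, v i := h1
      _ ≤ ∑ i ∈ t, w i := hts
      _ = _ := h2
      _ ≤ _ := h3
  have hAB : ∑ j ∈ range n, a j = ∑ j ∈ range n, b j := by
    have e1 : ∑ j ∈ range n, a j = ∑ i, v i := by
      rw [Finset.sum_range fun j => a j]
      rw [← Equiv.sum_comp τ v]
      apply Finset.sum_congr rfl
      intro i _
      simp [ha, ext0, i.2]
    have e2 : ∑ j ∈ range n, b j = ∑ i, w i := by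
      rw [Finset.sum_range fun j => b j]
      rw [← Equiv.sum_comp ρ w]
      apply Finset.sum_congr rfl
      intro i _
      simp [hb, ext0, i.2]
    rw [e1, e2, htot]
  -- d antitone on [0, n)
  have hdmono : ∀ i, i + 1 < n → d (i + 1) ≤ d i := by
    intro i hi
    have h1 : i < n := Nat.lt_of_succ_lt hi
    have := hτ (a := ⟨i, h1⟩) (b := ⟨i + 1, hi⟩) (by simp [Fin.le_def])
    simpa [hd, ext0, h1, hi] using this
  -- Abel summation comparison
  have habel : ∑ j ∈ range n, d j * a j ≤ ∑ j ∈ range n, d j * b j := by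
    have hpartsA := Finset.sum_range_by_parts d a n
    have hpartsB := Finset.sum_range_by_parts d b n
    simp only [smul_eq_mul] at hpartsA hpartsB
    rw [hpartsA, hpartsB, hAB]
    apply sub_le_sub_left
    apply Finset.sum_le_sum
    intro i hi
    have hi' : i + 1 < n := by
      have := mem_range.mp hi; omega
    have hd0 : d (i + 1) - d i ≤ 0 := sub_nonpos.mpr (hdmono i hi')
    have hAle : ∑ j ∈ range (i + 1), a j ≤ ∑ j ∈ range (i + 1), b j := hA _ (by omega)
    exact mul_le_mul_of_nonpos_left hAle hd0
  -- convert back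
  refine ⟨τ.symm.trans ρ, ?_⟩
  have e1 : ∑ i, c i * v i = ∑ j ∈ range n, d j * a j := by
    rw [Finset.sum_range fun j => d j * a j, ← Equiv.sum_comp τ (fun i => c i * v i)]
    apply Finset.sum_congr rfl
    intro i _
    simp [hd, ha, ext0, i.2]
  have e2 : ∑ i, c i * w ((τ.symm.trans ρ) i) = ∑ j ∈ range n, d j * b j := by
    rw [Finset.sum_range fun j => d j * b j,
      ← Equiv.sum_comp τ (fun i => c i * w ((τ.symm.trans ρ) i))]
    apply Finset.sum_congr rfl
    intro i _
    simp [hd, hb, ext0, i.2]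
  rw [e1, e2]
  exact habel

/-- Rado's theorem: a majorized vector lies in the convex hull of permutations. -/
lemma mem_convexHull_perms {n : ℕ} {v w : Fin n → ℝ} (h : VecMajorizedBy v w) :
    v ∈ convexHull ℝ (Set.range fun σ : Equiv.Perm (Fin n) => w ∘ σ) := by
  classical
  by_contra hv
  set S : Set (Fin n → ℝ) := Set.range fun σ : Equiv.Perm (Fin n) => w ∘ σ with hS
  have hSfin : S.Finite := Set.finite_range _
  have hclosed : IsClosed (convexHull ℝ S) := (hSfin.isCompact_convexHull ℝ).isClosed
  obtain ⟨f, u, hfu, huv⟩ :=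
    geometric_hahn_banach_closed_point (convex_convexHull ℝ S) hclosed hv
  set c : Fin n → ℝ := fun i => f (fun j => if i = j then 1 else 0) with hc
  have hf : ∀ x : Fin n → ℝ, f x = ∑ i, c i * x i := by
    intro x
    conv_lhs => rw [pi_eq_sum_univ x]
    rw [map_sum]
    apply Finset.sum_congr rfl
    intro i _
    rw [_root_.map_smul, smul_eq_mul, mul_comm]
  obtain ⟨σ, hσ⟩ := exists_perm_dot_le h c
  have h1 : f v ≤ f (w ∘ σ) := by
    rw [hf, hf]
    simpa using hσ
  have h2 : f (w ∘ σ) < u :=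
    hfu _ (subset_convexHull ℝ S ⟨σ, rfl⟩)
  linarith

/-- the permutation matrix of `σ` -/
def permMat {n : ℕ} (σ : Equiv.Perm (Fin n)) : Matrix (Fin n) (Fin n) ℝ :=
  Matrix.of fun i j => if σ i = j then 1 else 0

lemma permMat_mul_transpose {n : ℕ} (σ : Equiv.Perm (Fin n)) :
    permMat σ * (permMat σ)ᵀ = 1 := by
  ext i j
  simp only [mul_apply, transpose_apply, permMat, of_apply, one_apply]
  rw [Finset.sum_eq_single (σ i)]
  · simp [σ.injective.eq_iff, eq_comm]
  · intro k _ hk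
    simp [Ne.symm hk]
  · simp

lemma permMat_conj_diagonal {n : ℕ} (σ : Equiv.Perm (Fin n)) (w : Fin n → ℝ) :
    permMat σ * diagonal w * (permMat σ)ᵀ = diagonal (w ∘ σ) := by
  ext i j
  simp only [mul_apply, transpose_apply, permMat, of_apply, diagonal_apply]
  rw [Finset.sum_eq_single (σ i)]
  · rw [Finset.sum_eq_single (σ i)]
    · simp [σ.injective.eq_iff, eq_comm, Function.comp]
    · intro k _ hk
      simp [Ne.symm hk]
    · simp
  · intro k _ hk
    simp [Ne.symm hk, Finset.sum_ite_eq]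
  · simp

/-- If the real symmetric matrix `X` is majorized by the real symmetric matrix `Y`, then
`X` is a convex combination of orthogonal conjugates of `Y`: there are orthogonal matrices
`U i` and nonnegative weights `t i` summing to `1` with `X = ∑ i, t i • (U i * Y * (U i)ᵀ)`. -/
theorem majorized_eq_convexCombination_orthogonalConjugates {n : ℕ}
    (X Y : Matrix (Fin n) (Fin n) ℝ) (hX : X.IsHermitian) (hY : Y.IsHermitian)
    (h : MatMajorizedBy X Y) :
    ∃ (m : ℕ) (t : Fin m → ℝ) (U : Fin m → Matrix (Fin n) (Fin n) ℝ),
      (∀ i, 0 ≤ t i) ∧ (∑ i, t i = 1) ∧ (∀ i, U i * (U i)ᵀ = 1) ∧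
      X = ∑ i, t i • (U i * Y * (U i)ᵀ) := by
  classical
  obtain ⟨hX', hY', hmaj⟩ := h
  set Q : Matrix (Fin n) (Fin n) ℝ := (hX'.eigenvectorUnitary : Matrix (Fin n) (Fin n) ℝ)
    with hQdef
  set R : Matrix (Fin n) (Fin n) ℝ := (hY'.eigenvectorUnitary : Matrix (Fin n) (Fin n) ℝ)
    with hRdef
  have hQ1 : Q * Qᵀ = 1 := by
    have := (Matrix.mem_unitaryGroup_iff).mp hX'.eigenvectorUnitary.2
    rwa [star_eq_conjTranspose, conjTranspose_eq_transpose_of_trivial] at this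
  have hR1 : R * Rᵀ = 1 := by
    have := (Matrix.mem_unitaryGroup_iff).mp hY'.eigenvectorUnitary.2
    rwa [star_eq_conjTranspose, conjTranspose_eq_transpose_of_trivial] at this
  have hR2 : Rᵀ * R = 1 := by
    have := (Matrix.mem_unitaryGroup_iff').mp hY'.eigenvectorUnitary.2
    rwa [star_eq_conjTranspose, conjTranspose_eq_transpose_of_trivial] at this
  have hXspec : X = Q * diagonal hX'.eigenvalues * Qᵀ := by
    have := hX'.spectral_theorem
    rwa [Unitary.conjStarAlgAut_apply, star_eq_conjTranspose, conjTranspose_eq_transpose_of_trivial,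
      RCLike.ofReal_real_eq_id, Function.id_comp] at this
  have hYspec : Y = R * diagonal hY'.eigenvalues * Rᵀ := by
    have := hY'.spectral_theorem
    rwa [Unitary.conjStarAlgAut_apply, star_eq_conjTranspose, conjTranspose_eq_transpose_of_trivial,
      RCLike.ofReal_real_eq_id, Function.id_comp] at this
  have hDw : diagonal hY'.eigenvalues = Rᵀ * Y * R := by
    conv_rhs => rw [hYspec]
    rw [show Rᵀ * (R * diagonal hY'.eigenvalues * Rᵀ) * R
        = (Rᵀ * R) * diagonal hY'.eigenvalues * (Rᵀ * R) by simp only [Matrix.mul_assoc]]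
    rw [hR2]
    simp
  obtain ⟨ι, _inst, t, z, ht0, ht1, hz, hvz⟩ :=
    mem_convexHull_iff_exists_fintype.mp (mem_convexHull_perms hmaj)
  choose σ hσ using fun i => hz i
  set e := (Fintype.equivFin ι).symm with hedef
  refine ⟨Fintype.card ι, t ∘ e, fun i => Q * permMat (σ (e i)) * Rᵀ,
    fun i => ht0 _, (Equiv.sum_comp e t).trans ht1, ?_, ?_⟩
  · intro i
    have : Q * permMat (σ (e i)) * Rᵀ * (Q * permMat (σ (e i)) * Rᵀ)ᵀ
        = Q * (permMat (σ (e i)) * (Rᵀ * R) * (permMat (σ (e i)))ᵀ) * Qᵀ := by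
      simp only [Matrix.transpose_mul, Matrix.transpose_transpose, Matrix.mul_assoc]
    rw [this, hR2, Matrix.mul_one, permMat_mul_transpose, Matrix.mul_one, hQ1]
  · have hv : hX'.eigenvalues
        = ∑ i : Fin (Fintype.card ι), t (e i) • (hY'.eigenvalues ∘ (σ (e i))) := by
      have h2 : ∑ i : Fin (Fintype.card ι), t (e i) • (hY'.eigenvalues ∘ (σ (e i)))
          = ∑ i : ι, t i • z i := by
        rw [← Equiv.sum_comp e (fun i => t i • z i)]
        exact Finset.sum_congr rfl fun i _ => by rw [← hσ (e i)]
      exact (h2.trans hvz).symm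
    have hdiag : diagonal hX'.eigenvalues
        = ∑ i : Fin (Fintype.card ι), t (e i) • diagonal (hY'.eigenvalues ∘ (σ (e i))) := by
      ext i j
      rcases eq_or_ne i j with rfl | hij
      · have := congrFun hv i
        simp only [Finset.sum_apply, Pi.smul_apply, Function.comp_apply, smul_eq_mul] at this
        simp [Matrix.sum_apply, Matrix.smul_apply, diagonal_apply_eq, this]
      · simp [Matrix.sum_apply, Matrix.smul_apply, diagonal_apply, hij]
    calc X = Q * diagonal hX'.eigenvalues * Qᵀ := hXspec
      _ = Q * (∑ i : Fin (Fintype.card ι),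
            t (e i) • diagonal (hY'.eigenvalues ∘ (σ (e i)))) * Qᵀ := by rw [hdiag]
      _ = ∑ i : Fin (Fintype.card ι), (t ∘ e) i • (Q * permMat (σ (e i)) * Rᵀ * Y *
            (Q * permMat (σ (e i)) * Rᵀ)ᵀ) := by
          rw [Finset.mul_sum, Finset.sum_mul]
          apply Finset.sum_congr rfl
          intro i _
          rw [← permMat_conj_diagonal (σ (e i)) hY'.eigenvalues, hDw]
          simp only [Matrix.transpose_mul, Matrix.transpose_transpose,
            Matrix.mul_smul, Matrix.smul_mul, Function.comp_apply]
          congr 1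
          simp only [Matrix.mul_assoc]
end

section
/- Let A = [a_ij] and B = [b_ij] be n×n real symmetric matrices with b_ij ≠ 0 for all i, j, and suppose the matrix [a_ij / b_ij] is a correlation matrix. Then for every positive integer k and every n×n real symmetric matrix X, the Hadamard product A^{(k)} ∘ X is majorized by B^{(k)} ∘ X, where A^{(k)} = [a_ij^k] and B^{(k)} = [b_ij^k] denote entrywise k-th powers. -/
open Matrix

namespace HadamardMajAux

variable {n : ℕ}

lemma isHermitian_hadamard {C Q : Matrix (Fin n) (Fin n) ℝ}
    (hC : C.IsHermitian) (hQ : Q.IsHermitian) : (C ⊙ Q).IsHermitian := by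
  ext i j
  have h1 : C j i = C i j := by simpa using hC.apply i j
  have h2 : Q j i = Q i j := by simpa using hQ.apply i j
  simp [conjTranspose_apply, hadamard_apply, h1, h2]

lemma quad_expand (R : Matrix (Fin n) (Fin n) ℝ) (v : Fin n → ℝ) :
    star v ⬝ᵥ R *ᵥ v = ∑ i, ∑ j, v i * R i j * v j := by
  simp [dotProduct, mulVec, Finset.mul_sum, mul_assoc]

lemma spectral_real {H : Matrix (Fin n) (Fin n) ℝ} (hH : H.IsHermitian) :
    H = (hH.eigenvectorUnitary : Matrix (Fin n) (Fin n) ℝ) * diagonal hH.eigenvalues *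
      star (hH.eigenvectorUnitary : Matrix (Fin n) (Fin n) ℝ) := by
  have hcast : (RCLike.ofReal ∘ hH.eigenvalues : Fin n → ℝ) = hH.eigenvalues := by
    ext i; simp [RCLike.ofReal_real_eq_id]
  conv_lhs => rw [hH.spectral_theorem, hcast, Unitary.conjStarAlgAut_apply]

/-- Schur product theorem over ℝ. -/
lemma posSemidef_hadamard {C Q : Matrix (Fin n) (Fin n) ℝ}
    (hC : C.PosSemidef) (hQ : Q.PosSemidef) : (C ⊙ Q).PosSemidef := by
  classical
  refine .of_dotProduct_mulVec_nonneg (isHermitian_hadamard hC.1 hQ.1) ?_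
  intro x
  obtain ⟨lam, U, hlam, hentry⟩ : ∃ (lam : Fin n → ℝ) (U : Matrix (Fin n) (Fin n) ℝ),
      (∀ l, 0 ≤ lam l) ∧ ∀ i j, C i j = ∑ l, lam l * (U i l * U j l) := by
    refine ⟨hC.1.eigenvalues, (hC.1.eigenvectorUnitary : Matrix (Fin n) (Fin n) ℝ),
      hC.eigenvalues_nonneg, ?_⟩
    intro i j
    conv_lhs => rw [spectral_real hC.1]
    rw [Matrix.mul_apply]
    refine Finset.sum_congr rfl fun l _ => ?_
    rw [Matrix.mul_diagonal, Matrix.star_apply, star_trivial]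
    ring
  rw [quad_expand]
  have step : ∀ i j, x i * (C ⊙ Q) i j * x j
      = ∑ l, lam l * ((x i * U i l) * Q i j * (x j * U j l)) := by
    intro i j
    have h0 : x i * (C ⊙ Q) i j * x j
        = (∑ l, lam l * (U i l * U j l)) * (x i * Q i j * x j) := by
      rw [hadamard_apply, ← hentry i j]; ring
    rw [h0, Finset.sum_mul]
    exact Finset.sum_congr rfl fun l _ => by ring
  calc ∑ i, ∑ j, x i * (C ⊙ Q) i j * x j
      = ∑ i, ∑ j, ∑ l, lam l * ((x i * U i l) * Q i j * (x j * U j l)) :=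
        Finset.sum_congr rfl fun i _ => Finset.sum_congr rfl fun j _ => step i j
    _ = ∑ i, ∑ l, ∑ j, lam l * ((x i * U i l) * Q i j * (x j * U j l)) :=
        Finset.sum_congr rfl fun i _ => Finset.sum_comm
    _ = ∑ l, ∑ i, ∑ j, lam l * ((x i * U i l) * Q i j * (x j * U j l)) :=
        Finset.sum_comm
    _ ≥ 0 := by
        refine Finset.sum_nonneg fun l _ => ?_
        have h2 : ∑ i, ∑ j, lam l * ((x i * U i l) * Q i j * (x j * U j l))
            = lam l * (star (fun i => x i * U i l) ⬝ᵥ Q *ᵥ (fun i => x i * U i l)) := by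
          rw [quad_expand, Finset.mul_sum]
          refine Finset.sum_congr rfl fun i _ => ?_
          rw [Finset.mul_sum]
          try exact Finset.sum_congr rfl fun j _ => by ring
        rw [h2]
        exact mul_nonneg (hlam l) (hQ.dotProduct_mulVec_nonneg _)

lemma trace_mul_eq_sum (A B : Matrix (Fin n) (Fin n) ℝ) :
    (A * B).trace = ∑ i, ∑ j, A i j * B j i := by
  simp [Matrix.trace, Matrix.diag, mul_apply]

lemma trace_mul_diagonal (A : Matrix (Fin n) (Fin n) ℝ) (e : Fin n → ℝ) :
    (A * diagonal e).trace = ∑ j, A j j * e j := by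
  simp [Matrix.trace, Matrix.diag, mul_diagonal]

lemma trace_unitary_diag {U : Matrix (Fin n) (Fin n) ℝ} (hU : star U * U = 1)
    (d : Fin n → ℝ) : (U * diagonal d * star U).trace = ∑ i, d i := by
  rw [trace_mul_cycle, hU, Matrix.one_mul, trace_diagonal]

lemma sum_eigenvalues_eq_trace {H : Matrix (Fin n) (Fin n) ℝ} (hH : H.IsHermitian) :
    ∑ i, hH.eigenvalues i = H.trace := by
  have hcast : (RCLike.ofReal ∘ hH.eigenvalues : Fin n → ℝ) = hH.eigenvalues := by
    ext i; simp [RCLike.ofReal_real_eq_id]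
  conv_rhs => rw [hH.spectral_theorem, hcast, Unitary.conjStarAlgAut_apply]
  rw [trace_unitary_diag (mem_unitaryGroup_iff'.mp (hH.eigenvectorUnitary).2)]

lemma diag_nonneg {R : Matrix (Fin n) (Fin n) ℝ} (hR : R.PosSemidef) (j : Fin n) :
    0 ≤ R j j := by
  have := hR.dotProduct_mulVec_nonneg (Pi.single j 1)
  simpa [dotProduct, mulVec, Pi.single_apply, Finset.sum_ite_eq, Finset.sum_ite_eq',
    mul_ite, ite_mul] using this

/-- Existence of an optimal "top-k" index set. -/
lemma exists_topk (μ : Fin n → ℝ) (k : ℕ) (hk : k ≤ n) :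
    ∃ t : Finset (Fin n), t.card = k ∧
      ∀ c : Fin n → ℝ, (∀ j, 0 ≤ c j) → (∀ j, c j ≤ 1) → ∑ j, c j = (k : ℝ) →
        ∑ j, c j * μ j ≤ ∑ j ∈ t, μ j := by
  classical
  obtain ⟨t0, _, ht0card⟩ := Finset.exists_subset_card_eq
    (show k ≤ (Finset.univ : Finset (Fin n)).card by simpa using hk)
  have hS : t0 ∈ (Finset.univ : Finset (Fin n)).powersetCard k :=
    Finset.mem_powersetCard.mpr ⟨Finset.subset_univ _, ht0card⟩
  obtain ⟨t, htS, hmax⟩ := Finset.exists_max_image _ (fun u => ∑ j ∈ u, μ j) ⟨t0, hS⟩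
  obtain ⟨-, tcard⟩ := Finset.mem_powersetCard.mp htS
  refine ⟨t, tcard, ?_⟩
  intro c hc0 hc1 hcsum
  -- find a threshold τ
  have hτ : ∃ τ : ℝ, (∀ j ∈ t, τ ≤ μ j) ∧ (∀ j ∉ t, μ j ≤ τ) := by
    by_cases hte : t.Nonempty
    · refine ⟨t.inf' hte μ, fun j hj => Finset.inf'_le _ hj, ?_⟩
      obtain ⟨j1, hj1, hj1eq⟩ := Finset.exists_mem_eq_inf' hte μ
      intro j hj
      rw [hj1eq]
      have hins : insert j (t.erase j1) ∈ (Finset.univ : Finset (Fin n)).powersetCard k := by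
        refine Finset.mem_powersetCard.mpr ⟨Finset.subset_univ _, ?_⟩
        have h1t : 1 ≤ t.card := Finset.card_pos.mpr hte
        rw [Finset.card_insert_of_notMem (fun h => hj (Finset.mem_of_mem_erase h)),
          Finset.card_erase_of_mem hj1]
        omega
      have := hmax _ hins
      rw [Finset.sum_insert (fun h => hj (Finset.mem_of_mem_erase h))] at this
      have herase : ∑ x ∈ t.erase j1, μ x = (∑ x ∈ t, μ x) - μ j1 := by
        rw [← Finset.add_sum_erase t μ hj1]; ring
      rw [herase] at this
      linarith
    · by_cases hn : (Finset.univ : Finset (Fin n)).Nonempty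
      · refine ⟨Finset.univ.sup' hn μ, fun j hj => absurd ⟨j, hj⟩ hte, fun j _ => ?_⟩
        exact Finset.le_sup' μ (Finset.mem_univ j)
      · exact ⟨0, fun j hj => absurd ⟨j, hj⟩ hte,
          fun j _ => absurd ⟨j, Finset.mem_univ j⟩ hn⟩
  obtain ⟨τ, hτ1, hτ2⟩ := hτ
  set d : Fin n → ℝ := fun j => if j ∈ t then 1 else 0 with hd
  have hdmu : ∑ j ∈ t, μ j = ∑ j, d j * μ j := by
    simp only [hd, ite_mul, one_mul, zero_mul]
    rw [Finset.sum_ite_mem, Finset.univ_inter]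
  have hdsum : ∑ j, d j = (k : ℝ) := by
    simp only [hd]
    rw [Finset.sum_ite_mem, Finset.univ_inter, Finset.sum_const, tcard]
    simp
  have lin : ∑ j, (c j - d j) * τ = 0 := by
    rw [← Finset.sum_mul, Finset.sum_sub_distrib, hcsum, hdsum, sub_self, zero_mul]
  have hterm : ∀ j, (c j - d j) * (μ j - τ) ≤ 0 := by
    intro j
    by_cases hj : j ∈ t
    · have h1 : d j = 1 := by simp [hd, hj]
      nlinarith [hc1 j, hτ1 j hj]
    · have h1 : d j = 0 := by simp [hd, hj]
      nlinarith [hc0 j, hτ2 j hj]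
  have hsum2 : ∑ j, (c j - d j) * (μ j - τ) ≤ 0 :=
    Finset.sum_nonpos fun j _ => hterm j
  have hexp : ∑ j, c j * μ j
      = ∑ j, d j * μ j + (∑ j, (c j - d j) * (μ j - τ) + ∑ j, (c j - d j) * τ) := by
    rw [← Finset.sum_add_distrib, ← Finset.sum_add_distrib]
    exact Finset.sum_congr rfl fun j _ => by ring
  rw [hdmu]
  rw [hexp, lin]
  linarith

/-- Core majorization lemma: if `C` is PSD with unit diagonal and `M` is symmetric,
then `C ⊙ M` is majorized by `M`. -/
lemma hadamard_majorizedBy {C M : Matrix (Fin n) (Fin n) ℝ}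
    (hC : C.PosSemidef) (hCd : ∀ i, C i i = 1) (hM : M.IsHermitian) :
    MatMajorizedBy (C ⊙ M) M := by
  classical
  have hH : (C ⊙ M).IsHermitian := isHermitian_hadamard hC.1 hM
  refine ⟨hH, hM, ?_, ?_⟩
  swap
  · rw [sum_eigenvalues_eq_trace hH, sum_eigenvalues_eq_trace hM]
    simp [Matrix.trace, Matrix.diag, hadamard_apply, hCd]
  intro s
  have hk : s.card ≤ n := by simpa using Finset.card_le_univ s
  obtain ⟨t, htcard, htmax⟩ := exists_topk hM.eigenvalues s.card hk
  refine ⟨t, htcard, ?_⟩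
  set U : Matrix (Fin n) (Fin n) ℝ := (hH.eigenvectorUnitary : Matrix (Fin n) (Fin n) ℝ)
    with hUdef
  have hU1 : star U * U = 1 := mem_unitaryGroup_iff'.mp (hH.eigenvectorUnitary).2
  have hU2 : U * star U = 1 := mem_unitaryGroup_iff.mp (hH.eigenvectorUnitary).2
  set V : Matrix (Fin n) (Fin n) ℝ := (hM.eigenvectorUnitary : Matrix (Fin n) (Fin n) ℝ)
    with hVdef
  have hV1 : star V * V = 1 := mem_unitaryGroup_iff'.mp (hM.eigenvectorUnitary).2
  have hV2 : V * star V = 1 := mem_unitaryGroup_iff.mp (hM.eigenvectorUnitary).2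
  set d : Fin n → ℝ := fun i => if i ∈ s then 1 else 0 with hd
  set P : Matrix (Fin n) (Fin n) ℝ := U * diagonal d * star U with hPdef
  -- the eigenvalue sum over s equals trace (P * (C ⊙ M))
  have hPCM : P * (C ⊙ M) = U * diagonal (fun i => d i * hH.eigenvalues i) * star U := by
    conv_lhs => rw [spectral_real hH]
    rw [hPdef]
    calc (U * diagonal d * star U) * (U * diagonal hH.eigenvalues * star U)
        = U * diagonal d * ((star U * U) * (diagonal hH.eigenvalues * star U)) := by
          simp only [Matrix.mul_assoc]
      _ = U * (diagonal d * diagonal hH.eigenvalues) * star U := by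
          rw [hU1, Matrix.one_mul]; simp only [Matrix.mul_assoc]
      _ = U * diagonal (fun i => d i * hH.eigenvalues i) * star U := by
          rw [diagonal_mul_diagonal]
          try rfl
  have hsum_s : ∑ i ∈ s, hH.eigenvalues i = (P * (C ⊙ M)).trace := by
    rw [hPCM, trace_unitary_diag hU1]
    simp only [hd, ite_mul, one_mul, zero_mul]
    rw [Finset.sum_ite_mem, Finset.univ_inter]
  -- P is a projection-like matrix: 0 ≤ P ≤ 1
  have hPpsd : P.PosSemidef := by
    have hdg : Matrix.PosSemidef (diagonal d) := by
      refine Matrix.PosSemidef.diagonal ?_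
      intro i; by_cases hi : i ∈ s <;> simp [hd, hi]
    have := hdg.mul_mul_conjTranspose_same U
    rw [hPdef]
    simpa [Matrix.star_eq_conjTranspose] using this
  have h1P : (1 - P).PosSemidef := by
    have heq : (1 : Matrix (Fin n) (Fin n) ℝ) - P
        = U * diagonal (fun i => 1 - d i) * star U := by
      have h1 : diagonal (fun i => 1 - d i)
          = (1 : Matrix (Fin n) (Fin n) ℝ) - diagonal d := by
        ext i j
        by_cases h : i = j <;> simp [diagonal_apply, Matrix.one_apply, Matrix.sub_apply, h]
      rw [h1, Matrix.mul_sub, Matrix.sub_mul, Matrix.mul_one, hU2]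
    rw [heq]
    have hdg : Matrix.PosSemidef (diagonal (fun i => 1 - d i)) := by
      refine Matrix.PosSemidef.diagonal ?_
      intro i; by_cases hi : i ∈ s <;> simp [hd, hi]
    have := hdg.mul_mul_conjTranspose_same U
    simpa [Matrix.star_eq_conjTranspose] using this
  -- pass to Q = C ⊙ P
  set Q : Matrix (Fin n) (Fin n) ℝ := C ⊙ P with hQdef
  have hQpsd : Q.PosSemidef := posSemidef_hadamard hC hPpsd
  have h1Q : ((1 : Matrix (Fin n) (Fin n) ℝ) - Q).PosSemidef := by
    have hC1 : C ⊙ (1 : Matrix (Fin n) (Fin n) ℝ) = 1 := by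
      rw [Matrix.hadamard_one]
      rw [show C.diag = 1 from funext hCd]
      exact diagonal_one
    have hsub : C ⊙ ((1 : Matrix (Fin n) (Fin n) ℝ) - P) = C ⊙ 1 - C ⊙ P := by
      ext i j
      simp [hadamard_apply, Matrix.sub_apply, mul_sub]
    have heq : (1 : Matrix (Fin n) (Fin n) ℝ) - Q = C ⊙ (1 - P) := by
      rw [hsub, hC1, hQdef]
    rw [heq]
    exact posSemidef_hadamard hC h1P
  have htraceQ : Q.trace = P.trace := by
    simp only [Matrix.trace, Matrix.diag, hQdef, hadamard_apply]
    exact Finset.sum_congr rfl fun i _ => by rw [hCd i, one_mul]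
  have htraceP : P.trace = (s.card : ℝ) := by
    rw [hPdef, trace_unitary_diag hU1]
    simp only [hd]
    rw [Finset.sum_ite_mem, Finset.univ_inter, Finset.sum_const]
    simp
  -- trace (P * (C ⊙ M)) = trace (Q * M)
  have e1 : (P * (C ⊙ M)).trace = (Q * M).trace := by
    rw [trace_mul_eq_sum, trace_mul_eq_sum]
    refine Finset.sum_congr rfl fun i _ => Finset.sum_congr rfl fun j _ => ?_
    have hCsymm : C j i = C i j := by simpa using hC.1.apply i j
    simp only [hadamard_apply, hQdef]
    rw [hCsymm]; ring
  -- conjugate Q by V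
  set R : Matrix (Fin n) (Fin n) ℝ := star V * Q * V with hRdef
  have hRpsd : R.PosSemidef := by
    have := hQpsd.conjTranspose_mul_mul_same V
    rw [hRdef]
    simpa [Matrix.star_eq_conjTranspose] using this
  have h1R : ((1 : Matrix (Fin n) (Fin n) ℝ) - R).PosSemidef := by
    have heq : star V * (1 - Q) * V = (1 : Matrix (Fin n) (Fin n) ℝ) - R := by
      rw [Matrix.mul_sub, Matrix.mul_one, Matrix.sub_mul, hV1, ← hRdef]
    rw [← heq]
    have := h1Q.conjTranspose_mul_mul_same V
    simpa [Matrix.star_eq_conjTranspose] using this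
  have e2 : (Q * M).trace = ∑ j, R j j * hM.eigenvalues j := by
    conv_lhs => rw [spectral_real hM]
    rw [show Q * (V * diagonal hM.eigenvalues * star V)
        = (Q * V * diagonal hM.eigenvalues) * star V by simp only [Matrix.mul_assoc]]
    rw [trace_mul_comm, ← Matrix.mul_assoc, ← Matrix.mul_assoc, trace_mul_diagonal]
    try exact Finset.sum_congr rfl fun j _ => by rw [hRdef]
  have hc0 : ∀ j, 0 ≤ R j j := fun j => diag_nonneg hRpsd j
  have hc1 : ∀ j, R j j ≤ 1 := by
    intro j
    have := diag_nonneg h1R j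
    simp only [Matrix.sub_apply, Matrix.one_apply_eq] at this
    linarith
  have hcsum : ∑ j, R j j = (s.card : ℝ) := by
    have htr : R.trace = Q.trace := by
      rw [hRdef, trace_mul_cycle, hV2, Matrix.one_mul]
    have : ∑ j, R j j = R.trace := by simp [Matrix.trace, Matrix.diag]
    rw [this, htr, htraceQ, htraceP]
  calc ∑ i ∈ s, hH.eigenvalues i = (Q * M).trace := by rw [hsum_s, e1]
    _ = ∑ j, R j j * hM.eigenvalues j := e2
    _ ≤ ∑ j ∈ t, hM.eigenvalues j := htmax _ hc0 hc1 hcsum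

/-- entrywise positive powers of PSD matrices are PSD -/
lemma entrywisePow_posSemidef {C : Matrix (Fin n) (Fin n) ℝ} (hC : C.PosSemidef) :
    ∀ m : ℕ, Matrix.PosSemidef (Matrix.of fun i j => C i j ^ (m + 1))
  | 0 => by
    have h0 : (Matrix.of fun i j => C i j ^ (0 + 1)) = C := by
      ext i j; simp
    rw [h0]; exact hC
  | (m + 1) => by
    have h := posSemidef_hadamard hC (entrywisePow_posSemidef hC m)
    have heq : (Matrix.of fun i j => C i j ^ (m + 2))
        = C ⊙ (Matrix.of fun i j => C i j ^ (m + 1)) := by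
      ext i j
      simp [hadamard_apply, pow_succ]
      ring
    rw [heq]
    exact h

end HadamardMajAux

open HadamardMajAux in
/-- If `A`, `B` are real symmetric with all `b ij ≠ 0` and the matrix of ratios
`[a ij / b ij]` is a correlation matrix, then for every positive integer `k` and
every symmetric `X`, `A⁽ᵏ⁾ ⊙ X` is majorized by `B⁽ᵏ⁾ ⊙ X` (entrywise k-th powers). -/
theorem hadamardPow_majorized {n : ℕ} (A B : Matrix (Fin n) (Fin n) ℝ)
    (hA : A.IsHermitian) (hB : B.IsHermitian) (hBne : ∀ i j, B i j ≠ 0)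
    (hC : (Matrix.of fun i j => A i j / B i j).PosSemidef)
    (hCdiag : ∀ i, A i i / B i i = 1)
    (k : ℕ) (hk : 0 < k) (X : Matrix (Fin n) (Fin n) ℝ) (hX : X.IsHermitian) :
    MatMajorizedBy ((Matrix.of fun i j => A i j ^ k) ⊙ X)
      ((Matrix.of fun i j => B i j ^ k) ⊙ X) := by
  classical
  obtain ⟨m, rfl⟩ : ∃ m, k = m + 1 := ⟨k - 1, by omega⟩
  set Ck : Matrix (Fin n) (Fin n) ℝ :=
    Matrix.of fun i j => (A i j / B i j) ^ (m + 1) with hCk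
  have hCkpsd' : Ck.PosSemidef := by
    have := entrywisePow_posSemidef hC m
    exact this
  have hCkdiag : ∀ i, Ck i i = 1 := by
    intro i
    simp [hCk, hCdiag i]
  have hBX : ((Matrix.of fun i j => B i j ^ (m + 1)) ⊙ X).IsHermitian := by
    refine isHermitian_hadamard ?_ hX
    ext i j
    have h1 : B j i = B i j := by simpa using hB.apply i j
    simp [conjTranspose_apply, h1]
  have hEq : (Matrix.of fun i j => A i j ^ (m + 1)) ⊙ X
      = Ck ⊙ ((Matrix.of fun i j => B i j ^ (m + 1)) ⊙ X) := by
    ext i j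
    simp only [hadamard_apply, Matrix.of_apply, hCk]
    have hb : B i j ^ (m + 1) ≠ 0 := pow_ne_zero _ (hBne i j)
    rw [div_pow]
    field_simp
    try ring
  rw [hEq]
  exact hadamard_majorizedBy hCkpsd' hCkdiag hBX
end

section
/- Let A be an n×n real symmetric matrix and let L denote the linear map on n×n real symmetric matrices given by L(Y) = (A²Y + YA²)/2. Then for every positive integer k and every n×n real symmetric matrix X, the matrix A^k X A^k is majorized by L^k(X) (the k-fold iterate of L applied to X). -/
open Matrix

namespace PQML
open Finset
variable {n : ℕ}

/-- Fractional relaxation: a `[0,1]`-weighted sum with total weight `m` is dominated by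
some `m`-element subset sum. -/
lemma exists_subset_sum_ge (μ q : Fin n → ℝ) (m : ℕ) (hm : m ≤ n)
    (h0 : ∀ i, 0 ≤ q i) (h1 : ∀ i, q i ≤ 1) (hq : ∑ i, q i = m) :
    ∃ t : Finset (Fin n), t.card = m ∧ ∑ i, μ i * q i ≤ ∑ i ∈ t, μ i := by
  rcases Nat.eq_zero_or_pos m with hm0 | hm0
  · subst hm0
    have hq0 : ∀ i ∈ (univ : Finset (Fin n)), q i = 0 := by
      refine (Finset.sum_eq_zero_iff_of_nonneg (fun i _ => h0 i)).mp ?_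
      simpa using hq
    refine ⟨∅, rfl, ?_⟩
    rw [Finset.sum_eq_zero fun i hi => by rw [hq0 i hi, mul_zero]]
    simp
  · have hne : (Finset.powersetCard m (univ : Finset (Fin n))).Nonempty := by
      obtain ⟨t, _, ht⟩ := Finset.exists_subset_card_eq
        (show m ≤ (univ : Finset (Fin n)).card by simpa using hm)
      exact ⟨t, Finset.mem_powersetCard_univ.mpr ht⟩
    obtain ⟨T, hTmem, hTmax⟩ := Finset.exists_max_image _ (fun t => ∑ i ∈ t, μ i) hne
    have hTcard : T.card = m := Finset.mem_powersetCard_univ.mp hTmem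
    have hTne : T.Nonempty := Finset.card_pos.mp (by omega)
    obtain ⟨i₀, hi₀T, hi₀min⟩ := Finset.exists_min_image T μ hTne
    have hout : ∀ j, j ∉ T → μ j ≤ μ i₀ := by
      intro j hj
      by_contra hlt
      push_neg at hlt
      have hjne : j ∉ T.erase i₀ := fun h => hj (Finset.mem_of_mem_erase h)
      have hT' : (insert j (T.erase i₀)) ∈ Finset.powersetCard m (univ : Finset (Fin n)) := by
        rw [Finset.mem_powersetCard_univ, Finset.card_insert_of_notMem hjne,
          Finset.card_erase_of_mem hi₀T, hTcard]
        omega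
      have hle := hTmax _ hT'
      rw [Finset.sum_insert hjne] at hle
      have h2 : μ i₀ + ∑ x ∈ T.erase i₀, μ x = ∑ x ∈ T, μ x := Finset.add_sum_erase T μ hi₀T
      linarith
    refine ⟨T, hTcard, ?_⟩
    have hsplitq : ∑ i ∈ T, q i + ∑ i ∈ Tᶜ, q i = ∑ i, q i := Finset.sum_add_sum_compl T q
    have hTb : ∑ i ∈ T, (μ i * q i) ≤ ∑ i ∈ T, (μ i + μ i₀ * (q i - 1)) := by
      refine Finset.sum_le_sum fun i hi => ?_
      have := hi₀min i hi
      nlinarith [h0 i, h1 i]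
    have hCb : ∑ i ∈ Tᶜ, (μ i * q i) ≤ ∑ i ∈ Tᶜ, μ i₀ * q i := by
      refine Finset.sum_le_sum fun i hi => ?_
      have := hout i (Finset.mem_compl.mp hi)
      nlinarith [h0 i]
    have e1 : ∑ i ∈ T, (μ i + μ i₀ * (q i - 1))
        = ∑ i ∈ T, μ i + μ i₀ * (∑ i ∈ T, q i) - μ i₀ * m := by
      rw [Finset.sum_add_distrib, ← Finset.mul_sum]
      have : ∑ i ∈ T, (q i - 1) = ∑ i ∈ T, q i - m := by
        rw [Finset.sum_sub_distrib]
        simp [hTcard]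
      rw [this]; ring
    have e2 : ∑ i ∈ Tᶜ, μ i₀ * q i = μ i₀ * ∑ i ∈ Tᶜ, q i := (Finset.mul_sum _ _ _).symm
    have hmulsum : μ i₀ * (∑ i ∈ T, q i) + μ i₀ * (∑ i ∈ Tᶜ, q i) = μ i₀ * m := by
      rw [← mul_add, hsplitq, hq]
    have hsplit : ∑ i, μ i * q i = ∑ i ∈ T, (μ i * q i) + ∑ i ∈ Tᶜ, (μ i * q i) :=
      (Finset.sum_add_sum_compl T _).symm
    linarith [hTb.trans_eq e1, hCb.trans_eq e2]

/-- Quadratic form of a matrix. -/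
def QF (S : Matrix (Fin n) (Fin n) ℝ) (v : Fin n → ℝ) : ℝ := ∑ a, ∑ b, v a * v b * S a b

lemma qf_of_psd {S : Matrix (Fin n) (Fin n) ℝ} (hS : S.PosSemidef) (v : Fin n → ℝ) :
    0 ≤ QF S v := by
  have h := hS.dotProduct_mulVec_nonneg v
  have : star v ⬝ᵥ S *ᵥ v = QF S v := by
    simp only [dotProduct, mulVec, QF, Pi.star_apply, star_trivial, Finset.mul_sum]
    exact Finset.sum_congr rfl fun a _ => Finset.sum_congr rfl fun b _ => by ring
  rwa [this] at h

lemma psd_of_qf (S : Matrix (Fin n) (Fin n) ℝ) (hsym : ∀ a b, S a b = S b a)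
    (h : ∀ v, 0 ≤ QF S v) : S.PosSemidef := by
  refine Matrix.PosSemidef.of_dotProduct_mulVec_nonneg ?_ ?_
  · ext a b
    simp only [conjTranspose_apply, star_trivial]
    exact hsym b a
  · intro v
    have : star v ⬝ᵥ S *ᵥ v = QF S v := by
      simp only [dotProduct, mulVec, QF, Pi.star_apply, star_trivial, Finset.mul_sum]
      exact Finset.sum_congr rfl fun a _ => Finset.sum_congr rfl fun b _ => by ring
    rw [this]; exact h v

lemma gram_entry (C : Matrix (Fin n) (Fin n) ℝ) (a b : Fin n) :
    (Cᴴ * C) a b = ∑ r, C r a * C r b := by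
  simp [mul_apply, conjTranspose_apply]

/-- Hadamard powers of a PSD matrix have nonnegative quadratic form. -/
lemma qf_pow_nonneg {B : Matrix (Fin n) (Fin n) ℝ} (hB : B.PosSemidef) (k : ℕ) :
    ∀ v : Fin n → ℝ, 0 ≤ ∑ a, ∑ b, v a * v b * B a b ^ k := by
  obtain ⟨C, hC⟩ : ∃ C : Matrix (Fin n) (Fin n) ℝ, B = Cᴴ * C := by
    open scoped MatrixOrder in exact CStarAlgebra.nonneg_iff_eq_star_mul_self.mp hB.nonneg
  have hent : ∀ a b, B a b = ∑ r, C r a * C r b := fun a b => by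
    rw [hC]; exact gram_entry C a b
  induction k with
  | zero =>
    intro v
    simp only [pow_zero, mul_one]
    rw [← Finset.sum_mul_sum]
    exact mul_self_nonneg _
  | succ k ih =>
    intro v
    have key : ∑ a, ∑ b, v a * v b * B a b ^ (k + 1)
        = ∑ r, ∑ a, ∑ b, (v a * C r a) * (v b * C r b) * B a b ^ k := by
      have step : ∀ a b, v a * v b * B a b ^ (k + 1)
          = ∑ r, (v a * C r a) * (v b * C r b) * B a b ^ k := by
        intro a b
        have h2 : v a * v b * B a b ^ (k + 1) = (v a * v b * B a b ^ k) * B a b := by ring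
        rw [h2]
        nth_rewrite 2 [hent a b]
        rw [Finset.mul_sum]
        exact Finset.sum_congr rfl fun r _ => by ring
      calc ∑ a, ∑ b, v a * v b * B a b ^ (k + 1)
          = ∑ a, ∑ b, ∑ r, (v a * C r a) * (v b * C r b) * B a b ^ k :=
            Finset.sum_congr rfl fun a _ => Finset.sum_congr rfl fun b _ => step a b
        _ = ∑ a, ∑ r, ∑ b, (v a * C r a) * (v b * C r b) * B a b ^ k :=
            Finset.sum_congr rfl fun a _ => Finset.sum_comm
        _ = ∑ r, ∑ a, ∑ b, (v a * C r a) * (v b * C r b) * B a b ^ k := Finset.sum_comm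
    rw [key]
    exact Finset.sum_nonneg fun r _ => ih (fun a => v a * C r a)

/-- Weighted Gram compression keeps the quadratic form nonnegative. -/
lemma qf_weights {S : Matrix (Fin n) (Fin n) ℝ} (hS : ∀ v, 0 ≤ QF S v)
    (O : Matrix (Fin n) (Fin n) ℝ) (e : Fin n → ℝ) (he : ∀ r, 0 ≤ e r) (w : Fin n → ℝ) :
    0 ≤ ∑ a, ∑ b, w a * w b * S a b * (∑ r, e r * (O a r * O b r)) := by
  have key : ∑ a, ∑ b, w a * w b * S a b * (∑ r, e r * (O a r * O b r))
      = ∑ r, e r * QF S (fun a => w a * O a r) := by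
    have step : ∀ a b, w a * w b * S a b * (∑ r, e r * (O a r * O b r))
        = ∑ r, e r * ((w a * O a r) * (w b * O b r) * S a b) := by
      intro a b
      rw [Finset.mul_sum]
      exact Finset.sum_congr rfl fun r _ => by ring
    calc ∑ a, ∑ b, w a * w b * S a b * (∑ r, e r * (O a r * O b r))
        = ∑ a, ∑ b, ∑ r, e r * ((w a * O a r) * (w b * O b r) * S a b) :=
          Finset.sum_congr rfl fun a _ => Finset.sum_congr rfl fun b _ => step a b
      _ = ∑ a, ∑ r, ∑ b, e r * ((w a * O a r) * (w b * O b r) * S a b) :=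
          Finset.sum_congr rfl fun a _ => Finset.sum_comm
      _ = ∑ r, ∑ a, ∑ b, e r * ((w a * O a r) * (w b * O b r) * S a b) := Finset.sum_comm
      _ = ∑ r, e r * QF S (fun a => w a * O a r) := by
        refine Finset.sum_congr rfl fun r _ => ?_
        rw [QF, Finset.mul_sum]
        exact Finset.sum_congr rfl fun a _ => by rw [Finset.mul_sum]
  rw [key]
  exact Finset.sum_nonneg fun r _ => mul_nonneg (he r) (hS _)

lemma B_posSemidef (d : Fin n → ℝ) :
    Matrix.PosSemidef (Matrix.of fun a b : Fin n =>
      if d a = 0 ∧ d b = 0 then (1:ℝ) else 2 * d a * d b / (d a ^ 2 + d b ^ 2)) := by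
  classical
  set u : Fin n → ℝ := fun i => (1 - d i ^ 2) / (1 + d i ^ 2) with hu
  set g : Fin n → ℝ := fun i => d i * (1 + u i) with hg
  set cz : Fin n → ℝ := fun i => if d i = 0 then 1 else 0 with hcz
  have hden : ∀ i, (0:ℝ) < 1 + d i ^ 2 := fun i => by positivity
  have hu_lt : ∀ i, d i ≠ 0 → |u i| < 1 := by
    intro i hi
    have h2 : (0:ℝ) < d i ^ 2 := by positivity
    rw [abs_lt]
    constructor
    · rw [hu, lt_div_iff₀ (hden i)]
      nlinarith
    · rw [hu, div_lt_one (hden i)]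
      nlinarith
  have hg0 : ∀ i, d i = 0 → g i = 0 := fun i hi => by simp [hg, hi]
  have hsummable : ∀ a b, Summable (fun m : ℕ => (g a * u a ^ m) * (g b * u b ^ m)) := by
    intro a b
    by_cases ha : d a = 0
    · have : (fun m : ℕ => (g a * u a ^ m) * (g b * u b ^ m)) = fun _ => 0 := by
        funext m; rw [hg0 a ha]; ring
      rw [this]; exact summable_zero
    · by_cases hb : d b = 0
      · have : (fun m : ℕ => (g a * u a ^ m) * (g b * u b ^ m)) = fun _ => 0 := by
          funext m; rw [hg0 b hb]; ring
        rw [this]; exact summable_zero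
      · have h1 : |u a * u b| < 1 := by
          rw [abs_mul]
          nlinarith [abs_nonneg (u a), abs_nonneg (u b), hu_lt a ha, hu_lt b hb]
        have : (fun m : ℕ => (g a * u a ^ m) * (g b * u b ^ m))
            = fun m => (g a * g b) * (u a * u b) ^ m := by
          funext m; rw [mul_pow]; ring
        rw [this]
        exact (summable_geometric_of_abs_lt_one h1).mul_left _
  have key : ∀ a b, (if d a = 0 ∧ d b = 0 then (1:ℝ) else 2 * d a * d b / (d a ^ 2 + d b ^ 2))
      = cz a * cz b + ∑' m : ℕ, (g a * u a ^ m) * (g b * u b ^ m) := by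
    intro a b
    by_cases ha : d a = 0
    · by_cases hb : d b = 0
      · have ht : (fun m : ℕ => (g a * u a ^ m) * (g b * u b ^ m)) = fun _ => 0 := by
          funext m; rw [hg0 a ha]; ring
        rw [if_pos ⟨ha, hb⟩, ht, tsum_zero, hcz]
        simp [ha, hb]
      · have ht : (fun m : ℕ => (g a * u a ^ m) * (g b * u b ^ m)) = fun _ => 0 := by
          funext m; rw [hg0 a ha]; ring
        rw [if_neg (by tauto), ht, tsum_zero, hcz]
        simp [ha, hb]
    · by_cases hb : d b = 0
      · have ht : (fun m : ℕ => (g a * u a ^ m) * (g b * u b ^ m)) = fun _ => 0 := by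
          funext m; rw [hg0 b hb]; ring
        rw [if_neg (by tauto), ht, tsum_zero, hcz]
        simp [ha, hb]
      · have h1 : |u a * u b| < 1 := by
          rw [abs_mul]
          nlinarith [abs_nonneg (u a), abs_nonneg (u b), hu_lt a ha, hu_lt b hb]
        have ht : (fun m : ℕ => (g a * u a ^ m) * (g b * u b ^ m))
            = fun m => (g a * g b) * (u a * u b) ^ m := by
          funext m; rw [mul_pow]; ring
        have htsum : ∑' m : ℕ, (g a * u a ^ m) * (g b * u b ^ m)
            = g a * g b * (1 - u a * u b)⁻¹ := by
          rw [ht, tsum_mul_left, tsum_geometric_of_abs_lt_one h1]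
        rw [if_neg (by tauto), htsum, hcz]
        have ha2 : (0:ℝ) < d a ^ 2 := by positivity
        have hb2 : (0:ℝ) < d b ^ 2 := by positivity
        have hab : (0:ℝ) < d a ^ 2 + d b ^ 2 := by positivity
        have hq : 1 - u a * u b = 2 * (d a ^ 2 + d b ^ 2) / ((1 + d a ^ 2) * (1 + d b ^ 2)) := by
          rw [hu]
          field_simp
          ring
        simp only [if_neg ha, if_neg hb, zero_mul, zero_add, hq, hg, hu]
        field_simp
        rw [eq_div_iff (by nlinarith)]
        ring
  refine psd_of_qf _ (fun a b => ?_) (fun v => ?_)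
  · simp only [Matrix.of_apply]
    rw [key a b, key b a]
    exact congrArg₂ (· + ·) (mul_comm _ _) (tsum_congr fun m => mul_comm _ _)
  · have hqf : QF (Matrix.of fun a b : Fin n =>
        if d a = 0 ∧ d b = 0 then (1:ℝ) else 2 * d a * d b / (d a ^ 2 + d b ^ 2)) v
        = (∑ a, v a * cz a) ^ 2 + ∑' m : ℕ, (∑ a, v a * (g a * u a ^ m)) ^ 2 := by
      rw [QF]
      have step1 : ∀ a b : Fin n, v a * v b * (Matrix.of fun a b : Fin n =>
          if d a = 0 ∧ d b = 0 then (1:ℝ) else 2 * d a * d b / (d a ^ 2 + d b ^ 2)) a b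
          = (v a * cz a) * (v b * cz b)
            + ∑' m : ℕ, (v a * (g a * u a ^ m)) * (v b * (g b * u b ^ m)) := by
        intro a b
        rw [Matrix.of_apply, key a b, mul_add]
        congr 1
        · ring
        · rw [← tsum_mul_left]
          exact tsum_congr fun m => by ring
      have hsum2 : ∀ a b : Fin n,
          Summable (fun m : ℕ => (v a * (g a * u a ^ m)) * (v b * (g b * u b ^ m))) := by
        intro a b
        have : (fun m : ℕ => (v a * (g a * u a ^ m)) * (v b * (g b * u b ^ m)))
            = fun m => (v a * v b) * ((g a * u a ^ m) * (g b * u b ^ m)) := by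
          funext m; ring
        rw [this]
        exact (hsummable a b).mul_left _
      calc ∑ a, ∑ b, v a * v b * (Matrix.of fun a b : Fin n =>
              if d a = 0 ∧ d b = 0 then (1:ℝ) else 2 * d a * d b / (d a ^ 2 + d b ^ 2)) a b
          = ∑ a, ∑ b, ((v a * cz a) * (v b * cz b)
              + ∑' m : ℕ, (v a * (g a * u a ^ m)) * (v b * (g b * u b ^ m))) :=
            Finset.sum_congr rfl fun a _ => Finset.sum_congr rfl fun b _ => step1 a b
        _ = (∑ a, ∑ b, (v a * cz a) * (v b * cz b))
              + ∑ a, ∑ b, ∑' m : ℕ, (v a * (g a * u a ^ m)) * (v b * (g b * u b ^ m)) := by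
            rw [← Finset.sum_add_distrib]
            exact Finset.sum_congr rfl fun a _ => Finset.sum_add_distrib
        _ = (∑ a, v a * cz a) ^ 2 + ∑' m : ℕ, (∑ a, v a * (g a * u a ^ m)) ^ 2 := by
            congr 1
            · rw [sq, Finset.sum_mul_sum]
            · have swap1 : ∀ a : Fin n, ∑ b, ∑' m : ℕ,
                  (v a * (g a * u a ^ m)) * (v b * (g b * u b ^ m))
                  = ∑' m : ℕ, ∑ b, (v a * (g a * u a ^ m)) * (v b * (g b * u b ^ m)) :=
                fun a => (Summable.tsum_finsetSum fun b _ => hsum2 a b).symm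
              rw [Finset.sum_congr rfl fun a _ => swap1 a]
              rw [← Summable.tsum_finsetSum fun a _ => summable_sum fun b _ => hsum2 a b]
              refine tsum_congr fun m => ?_
              rw [sq, Finset.sum_mul_sum]
    rw [hqf]
    exact add_nonneg (sq_nonneg _) (tsum_nonneg fun m => sq_nonneg _)

lemma trace_mul_entries (P Q : Matrix (Fin n) (Fin n) ℝ) :
    Matrix.trace (P * Q) = ∑ a, ∑ b, P a b * Q b a := by
  simp [Matrix.trace, Matrix.diag, Matrix.mul_apply]

lemma trace_conj {U : Matrix (Fin n) (Fin n) ℝ} (hU1 : star U * U = 1)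
    (P : Matrix (Fin n) (Fin n) ℝ) :
    Matrix.trace (U * P * star U) = Matrix.trace P := by
  rw [Matrix.trace_mul_cycle, hU1, Matrix.one_mul]

lemma sum_eigenvalues_eq_trace {H : Matrix (Fin n) (Fin n) ℝ} (hH : H.IsHermitian) :
    ∑ i, hH.eigenvalues i = Matrix.trace H := by
  have hspec : H = (hH.eigenvectorUnitary : Matrix (Fin n) (Fin n) ℝ) * diagonal hH.eigenvalues
      * star (hH.eigenvectorUnitary : Matrix (Fin n) (Fin n) ℝ) := by
    simpa [RCLike.ofReal_real_eq_id, Function.id_comp] using hH.spectral_theorem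
  calc ∑ i, hH.eigenvalues i = Matrix.trace (diagonal hH.eigenvalues) := (trace_diagonal _).symm
    _ = Matrix.trace H := by
        conv_rhs => rw [hspec]
        rw [trace_conj (Unitary.coe_star_mul_self _)]

/-- The central lemma: if `M = U M' U*`, `N = U N' U*` with `U` unitary and `M' = S ⊙ N'`
entrywise for a PSD matrix `S` with unit diagonal, then the eigenvalues of `M` are
majorized by those of `N`. -/
lemma maj_of_frame (U S M' N' M N : Matrix (Fin n) (Fin n) ℝ)
    (hU1 : star U * U = 1) (hU2 : U * star U = 1)
    (hSsym : ∀ a b, S a b = S b a) (hSdiag : ∀ a, S a a = 1)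
    (hSqf : ∀ v, 0 ≤ QF S v)
    (hSN : ∀ a b, M' a b = S a b * N' a b)
    (hM : M = U * M' * star U) (hN : N = U * N' * star U)
    (hMh : M.IsHermitian) (hNh : N.IsHermitian) :
    VecMajorizedBy hMh.eigenvalues hNh.eigenvalues := by
  classical
  obtain ⟨V, hVdef⟩ : ∃ V, V = (hMh.eigenvectorUnitary : Matrix (Fin n) (Fin n) ℝ) := ⟨_, rfl⟩
  obtain ⟨W, hWdef⟩ : ∃ W, W = (hNh.eigenvectorUnitary : Matrix (Fin n) (Fin n) ℝ) := ⟨_, rfl⟩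
  have hV1 : star V * V = 1 := by rw [hVdef]; exact Unitary.coe_star_mul_self _
  have hV2 : V * star V = 1 := by rw [hVdef]; exact Unitary.coe_mul_star_self _
  have hW1 : star W * W = 1 := by rw [hWdef]; exact Unitary.coe_star_mul_self _
  have hW2 : W * star W = 1 := by rw [hWdef]; exact Unitary.coe_mul_star_self _
  set lam : Fin n → ℝ := hMh.eigenvalues with hlam
  set mu : Fin n → ℝ := hNh.eigenvalues with hmu
  have hMspec : M = V * diagonal lam * star V := by
    rw [hVdef, hlam]
    simpa [RCLike.ofReal_real_eq_id, Function.id_comp] using hMh.spectral_theorem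
  have hNspec : N = W * diagonal mu * star W := by
    rw [hWdef, hmu]
    simpa [RCLike.ofReal_real_eq_id, Function.id_comp] using hNh.spectral_theorem
  have cU : ∀ Z : Matrix (Fin n) (Fin n) ℝ, star U * (U * Z) = Z := fun Z => by
    rw [← Matrix.mul_assoc, hU1, Matrix.one_mul]
  have cU' : ∀ Z : Matrix (Fin n) (Fin n) ℝ, U * (star U * Z) = Z := fun Z => by
    rw [← Matrix.mul_assoc, hU2, Matrix.one_mul]
  have cV : ∀ Z : Matrix (Fin n) (Fin n) ℝ, star V * (V * Z) = Z := fun Z => by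
    rw [← Matrix.mul_assoc, hV1, Matrix.one_mul]
  -- frames
  set O : Matrix (Fin n) (Fin n) ℝ := star U * V with hO
  set O₂ : Matrix (Fin n) (Fin n) ℝ := star U * W with hO₂
  have hstarO : star O = star V * U := by rw [hO, StarMul.star_mul, star_star]
  have hstarO₂ : star O₂ = star W * U := by rw [hO₂, StarMul.star_mul, star_star]
  have hOO' : O * star O = 1 := by
    rw [hO, hstarO, Matrix.mul_assoc, ← Matrix.mul_assoc V, hV2, Matrix.one_mul, hU1]
  have hOO : star O * O = 1 := by
    rw [hO, hstarO, Matrix.mul_assoc, ← Matrix.mul_assoc U, hU2, Matrix.one_mul, hV1]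
  have hO₂O' : O₂ * star O₂ = 1 := by
    rw [hO₂, hstarO₂, Matrix.mul_assoc, ← Matrix.mul_assoc W, hW2, Matrix.one_mul, hU1]
  have hO₂O : star O₂ * O₂ = 1 := by
    rw [hO₂, hstarO₂, Matrix.mul_assoc, ← Matrix.mul_assoc U, hU2, Matrix.one_mul, hW1]
  -- N' in the O₂ frame
  have hN'frame : N' = O₂ * diagonal mu * star O₂ := by
    have h1 : N' = star U * N * U := by
      rw [hN]
      simp only [Matrix.mul_assoc, cU]
      rw [hU1, Matrix.mul_one]
    rw [h1, hNspec, hO₂, hstarO₂]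
    simp only [Matrix.mul_assoc]
  constructor
  · -- subset sums
    intro s
    set m := s.card with hm
    have hmn : m ≤ n := by
      rw [hm]
      simpa using Finset.card_le_univ s
    set e : Fin n → ℝ := fun r => if r ∈ s then 1 else 0 with he
    set P' : Matrix (Fin n) (Fin n) ℝ := O * diagonal e * star O with hP'
    set Q' : Matrix (Fin n) (Fin n) ℝ := Matrix.of (fun a b => S a b * P' a b) with hQ'
    have hP'ent : ∀ a b, P' a b = ∑ r, e r * (O a r * O b r) := by
      intro a b
      rw [hP', Matrix.mul_apply]
      refine Finset.sum_congr rfl fun r _ => ?_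
      rw [Matrix.mul_diagonal, Matrix.star_apply, star_trivial]
      ring
    set q : Fin n → ℝ := fun i => (star O₂ * Q' * O₂) i i with hqdef
    have hq_sum : ∀ i, q i = ∑ a, ∑ b, (O₂ a i) * (O₂ b i) * (S a b * P' a b) := by
      intro i
      rw [hqdef]
      simp only [Matrix.mul_apply, Matrix.star_apply, star_trivial, Finset.sum_mul]
      rw [Finset.sum_comm]
      refine Finset.sum_congr rfl fun a _ => Finset.sum_congr rfl fun b _ => ?_
      rw [hQ', Matrix.of_apply]
      ring
    -- step 1 : ∑_{i∈s} lam i = trace (P' * M')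
    have step1 : ∑ i ∈ s, lam i = Matrix.trace (P' * M') := by
      have hid : V * diagonal e * star V * M = U * (P' * M') * star U := by
        rw [hM, hP', hO, hstarO]
        simp only [Matrix.mul_assoc, cU']
      have t1 : Matrix.trace (V * diagonal e * star V * M) = ∑ i ∈ s, lam i := by
        rw [hMspec]
        have hid2 : V * diagonal e * star V * (V * diagonal lam * star V)
            = V * (diagonal e * diagonal lam) * star V := by
          simp only [Matrix.mul_assoc, cV]
        rw [hid2, trace_conj hV1, diagonal_mul_diagonal, trace_diagonal]
        rw [he]
        simp only [ite_mul, one_mul, zero_mul]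
        rw [Finset.sum_ite_mem, Finset.univ_inter]
      rw [← t1, hid, trace_conj hU1]
    -- step 2 : trace (P' * M') = trace (Q' * N')
    have step2 : Matrix.trace (P' * M') = Matrix.trace (Q' * N') := by
      rw [trace_mul_entries, trace_mul_entries]
      refine Finset.sum_congr rfl fun a _ => Finset.sum_congr rfl fun b _ => ?_
      rw [hSN b a, hQ', Matrix.of_apply, hSsym a b]
      ring
    -- step 3 : trace (Q' * N') = ∑ i, mu i * q i
    have step3 : Matrix.trace (Q' * N') = ∑ i, mu i * q i := by
      rw [hN'frame, ← Matrix.mul_assoc, ← Matrix.mul_assoc,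
        Matrix.trace_mul_cycle (Q' * O₂) (diagonal mu) (star O₂)]
      have : star O₂ * (Q' * O₂) * diagonal mu = (star O₂ * Q' * O₂) * diagonal mu := by
        simp only [Matrix.mul_assoc]
      rw [this]
      have ht : Matrix.trace ((star O₂ * Q' * O₂) * diagonal mu)
          = ∑ i, (star O₂ * Q' * O₂) i i * mu i := by
        simp [Matrix.trace, Matrix.diag, Matrix.mul_diagonal]
      rw [ht]
      exact Finset.sum_congr rfl fun i _ => by rw [hqdef]; ring
    -- bounds on q
    have he0 : ∀ r, 0 ≤ e r := by
      intro r; rw [he]; dsimp only; split <;> norm_num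
    have he1 : ∀ r, e r ≤ 1 := by
      intro r; rw [he]; dsimp only; split <;> norm_num
    have hq0 : ∀ i, 0 ≤ q i := by
      intro i
      rw [hq_sum i]
      have h := qf_weights hSqf O e he0 (fun a => O₂ a i)
      calc (0:ℝ) ≤ ∑ a, ∑ b, O₂ a i * O₂ b i * S a b * (∑ r, e r * (O a r * O b r)) := h
        _ = ∑ a, ∑ b, O₂ a i * O₂ b i * (S a b * P' a b) := by
          refine Finset.sum_congr rfl fun a _ => Finset.sum_congr rfl fun b _ => ?_
          rw [hP'ent a b]
          ring
    have hcol : ∀ i, ∑ a, O₂ a i * O₂ a i = 1 := by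
      intro i
      have : (star O₂ * O₂) i i = (1 : Matrix (Fin n) (Fin n) ℝ) i i := by rw [hO₂O]
      simpa [Matrix.mul_apply, Matrix.star_apply, star_trivial, Matrix.one_apply] using this
    have hrow : ∀ r, ∑ a, O a r * O a r = 1 := by
      intro r
      have : (star O * O) r r = (1 : Matrix (Fin n) (Fin n) ℝ) r r := by rw [hOO]
      simpa [Matrix.mul_apply, Matrix.star_apply, star_trivial, Matrix.one_apply] using this
    have hdelta : ∀ a b, ∑ r, O a r * O b r = if a = b then (1:ℝ) else 0 := by
      intro a b
      have : (O * star O) a b = (1 : Matrix (Fin n) (Fin n) ℝ) a b := by rw [hOO']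
      simpa [Matrix.mul_apply, Matrix.star_apply, star_trivial, Matrix.one_apply] using this
    have hq1 : ∀ i, q i ≤ 1 := by
      intro i
      have h := qf_weights hSqf O (fun r => 1 - e r) (fun r => sub_nonneg.mpr (he1 r)) (fun a => O₂ a i)
      have hexp : ∑ a, ∑ b, O₂ a i * O₂ b i * S a b * (∑ r, (1 - e r) * (O a r * O b r))
          = 1 - q i := by
        have hterm : ∀ a b, O₂ a i * O₂ b i * S a b * (∑ r, (1 - e r) * (O a r * O b r))
            = O₂ a i * O₂ b i * S a b * (if a = b then (1:ℝ) else 0)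
              - O₂ a i * O₂ b i * (S a b * P' a b) := by
          intro a b
          have hsub : ∑ r, (1 - e r) * (O a r * O b r)
              = (if a = b then (1:ℝ) else 0) - P' a b := by
            rw [← hdelta a b, hP'ent a b, ← Finset.sum_sub_distrib]
            exact Finset.sum_congr rfl fun r _ => by ring
          rw [hsub]
          ring
        calc ∑ a, ∑ b, O₂ a i * O₂ b i * S a b * (∑ r, (1 - e r) * (O a r * O b r))
            = ∑ a, ∑ b, (O₂ a i * O₂ b i * S a b * (if a = b then (1:ℝ) else 0)
              - O₂ a i * O₂ b i * (S a b * P' a b)) :=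
              Finset.sum_congr rfl fun a _ => Finset.sum_congr rfl fun b _ => hterm a b
          _ = (∑ a, ∑ b, O₂ a i * O₂ b i * S a b * (if a = b then (1:ℝ) else 0)) - q i := by
              rw [hq_sum i, ← Finset.sum_sub_distrib]
              exact Finset.sum_congr rfl fun a _ => Finset.sum_sub_distrib _ _
          _ = 1 - q i := by
              congr 1
              have hinner : ∀ a, ∑ b, O₂ a i * O₂ b i * S a b * (if a = b then (1:ℝ) else 0)
                  = O₂ a i * O₂ a i := by
                intro a
                rw [Finset.sum_eq_single a]
                · rw [if_pos rfl, hSdiag a]; ring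
                · intro b _ hb; rw [if_neg (fun h => hb h.symm), mul_zero]
                · intro h; exact absurd (Finset.mem_univ a) h
              rw [Finset.sum_congr rfl fun a _ => hinner a, hcol i]
      rw [hexp] at h
      linarith
    -- total weight of q
    have hqsum : ∑ i, q i = (m : ℝ) := by
      have t1 : ∑ i, q i = Matrix.trace (star O₂ * Q' * O₂) := by
        simp [Matrix.trace, Matrix.diag, hqdef]
      have t2 : Matrix.trace (star O₂ * Q' * O₂) = Matrix.trace Q' := by
        rw [Matrix.trace_mul_cycle (star O₂) Q' O₂, hO₂O', Matrix.one_mul]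
      have t3 : Matrix.trace Q' = ∑ a, P' a a := by
        simp only [Matrix.trace, Matrix.diag, hQ', Matrix.of_apply]
        exact Finset.sum_congr rfl fun a _ => by rw [hSdiag a, one_mul]
      have t4 : ∑ a, P' a a = ∑ r, e r := by
        calc ∑ a, P' a a = ∑ a, ∑ r, e r * (O a r * O a r) :=
              Finset.sum_congr rfl fun a _ => hP'ent a a
          _ = ∑ r, ∑ a, e r * (O a r * O a r) := Finset.sum_comm
          _ = ∑ r, e r := by
              refine Finset.sum_congr rfl fun r _ => ?_
              rw [← Finset.mul_sum, hrow r, mul_one]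
      have t5 : ∑ r, e r = (m : ℝ) := by
        rw [he, hm]
        simp [Finset.sum_ite_mem]
      rw [t1, t2, t3, t4, t5]
    obtain ⟨t, htcard, hineq⟩ := exists_subset_sum_ge mu q m hmn hq0 hq1 hqsum
    refine ⟨t, by rw [htcard, hm], ?_⟩
    calc ∑ i ∈ s, lam i = Matrix.trace (P' * M') := step1
      _ = Matrix.trace (Q' * N') := step2
      _ = ∑ i, mu i * q i := step3
      _ ≤ ∑ i ∈ t, mu i := hineq
  · -- total sums
    have h1 : ∑ i, lam i = Matrix.trace M' := by
      rw [sum_eigenvalues_eq_trace hMh, hM, trace_conj hU1]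
    have h2 : ∑ i, mu i = Matrix.trace N' := by
      rw [sum_eigenvalues_eq_trace hNh, hN, trace_conj hU1]
    have h3 : Matrix.trace M' = Matrix.trace N' := by
      simp only [Matrix.trace, Matrix.diag]
      exact Finset.sum_congr rfl fun a _ => by rw [hSN a a, hSdiag a, one_mul]
    rw [h1, h2, h3]

end PQML

open PQML

/-- For real symmetric `A`, `X` and `L Y = (A²Y + YA²)/2`, the matrix `Aᵏ * X * Aᵏ` is
majorized by the k-fold iterate `L^[k] X`, for every positive integer `k`. -/
theorem pow_quadratic_majorized_iterate_lyapunov {n : ℕ}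
    (A : Matrix (Fin n) (Fin n) ℝ) (hA : A.IsHermitian)
    (k : ℕ) (hk : 0 < k) (X : Matrix (Fin n) (Fin n) ℝ) (hX : X.IsHermitian) :
    MatMajorizedBy (A ^ k * X * A ^ k)
      ((fun Y => (2 : ℝ)⁻¹ • (A ^ 2 * Y + Y * A ^ 2))^[k] X) := by
  classical
  set L : Matrix (Fin n) (Fin n) ℝ → Matrix (Fin n) (Fin n) ℝ :=
    fun Y => (2 : ℝ)⁻¹ • (A ^ 2 * Y + Y * A ^ 2) with hLdef
  have hM : (A ^ k * X * A ^ k).IsHermitian := by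
    have h1 : (A ^ k).IsHermitian := hA.pow k
    show (A ^ k * X * A ^ k)ᴴ = _
    rw [Matrix.conjTranspose_mul, Matrix.conjTranspose_mul, h1.eq, hX.eq, ← Matrix.mul_assoc]
  have hLherm : ∀ Y : Matrix (Fin n) (Fin n) ℝ, Y.IsHermitian → (L Y).IsHermitian := by
    intro Y hY
    have h2 : (A ^ 2).IsHermitian := hA.pow 2
    show (L Y)ᴴ = L Y
    rw [hLdef]
    dsimp only
    rw [Matrix.conjTranspose_smul, Matrix.conjTranspose_add, Matrix.conjTranspose_mul,
      Matrix.conjTranspose_mul, h2.eq, hY.eq, star_trivial, add_comm]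
  have hNh : ∀ j : ℕ, (L^[j] X).IsHermitian := by
    intro j
    induction j with
    | zero => simpa using hX
    | succ j ih => rw [Function.iterate_succ_apply']; exact hLherm _ ih
  obtain ⟨U, hUdef⟩ : ∃ U, U = (hA.eigenvectorUnitary : Matrix (Fin n) (Fin n) ℝ) := ⟨_, rfl⟩
  set d : Fin n → ℝ := hA.eigenvalues with hd
  have hU1 : star U * U = 1 := by rw [hUdef]; exact Unitary.coe_star_mul_self _
  have hU2 : U * star U = 1 := by rw [hUdef]; exact Unitary.coe_mul_star_self _
  have hAspec : A = U * diagonal d * star U := by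
    rw [hUdef, hd]
    simpa [RCLike.ofReal_real_eq_id, Function.id_comp] using hA.spectral_theorem
  have cU : ∀ Z : Matrix (Fin n) (Fin n) ℝ, star U * (U * Z) = Z := fun Z => by
    rw [← Matrix.mul_assoc, hU1, Matrix.one_mul]
  have cU' : ∀ Z : Matrix (Fin n) (Fin n) ℝ, U * (star U * Z) = Z := fun Z => by
    rw [← Matrix.mul_assoc, hU2, Matrix.one_mul]
  set X' : Matrix (Fin n) (Fin n) ℝ := star U * X * U with hX'
  have hApow : ∀ j : ℕ, A ^ j = U * diagonal (fun i => d i ^ j) * star U := by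
    intro j
    induction j with
    | zero =>
      simp only [pow_zero]
      rw [Matrix.diagonal_one, Matrix.mul_one, hU2]
    | succ j ih =>
      rw [pow_succ, ih, hAspec]
      have hdd : diagonal (fun i => d i ^ j) * diagonal d
          = diagonal (fun i => d i ^ (j + 1)) := by
        rw [Matrix.diagonal_mul_diagonal]
        exact congrArg diagonal (funext fun i => (pow_succ (d i) j).symm)
      calc U * diagonal (fun i => d i ^ j) * star U * (U * diagonal d * star U)
          = U * (diagonal (fun i => d i ^ j) * (diagonal d * star U)) := by
            simp only [Matrix.mul_assoc, cU]
        _ = U * diagonal (fun i => d i ^ (j + 1)) * star U := by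
            rw [← Matrix.mul_assoc (diagonal fun i => d i ^ j) (diagonal d) (star U), hdd,
              ← Matrix.mul_assoc]
  set c : Fin n → Fin n → ℝ := fun a b => (d a ^ 2 + d b ^ 2) / 2 with hc
  have hMc : A ^ k * X * A ^ k
      = U * (diagonal (fun i => d i ^ k) * X' * diagonal (fun i => d i ^ k)) * star U := by
    rw [hApow k, hX']
    simp only [Matrix.mul_assoc]
  have hNc : ∀ j : ℕ, L^[j] X = U * Matrix.of (fun a b => c a b ^ j * X' a b) * star U := by
    intro j
    induction j with
    | zero =>
      simp only [Function.iterate_zero, id_eq, pow_zero, one_mul]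
      have hofX : Matrix.of (fun a b => X' a b) = X' := rfl
      rw [hofX, hX']
      simp only [Matrix.mul_assoc, cU']
      rw [hU2, Matrix.mul_one]
    | succ j ih =>
      rw [Function.iterate_succ_apply', ih, hLdef]
      dsimp only
      rw [hApow 2]
      have hleft : U * diagonal (fun i => d i ^ 2) * star U
            * (U * Matrix.of (fun a b => c a b ^ j * X' a b) * star U)
          = U * (diagonal (fun i => d i ^ 2) * Matrix.of (fun a b => c a b ^ j * X' a b))
            * star U := by
        simp only [Matrix.mul_assoc, cU]
      have hright : U * Matrix.of (fun a b => c a b ^ j * X' a b) * star U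
            * (U * diagonal (fun i => d i ^ 2) * star U)
          = U * (Matrix.of (fun a b => c a b ^ j * X' a b) * diagonal (fun i => d i ^ 2))
            * star U := by
        simp only [Matrix.mul_assoc, cU]
      rw [hleft, hright]
      have hadd : ∀ Z1 Z2 : Matrix (Fin n) (Fin n) ℝ,
          U * Z1 * star U + U * Z2 * star U = U * (Z1 + Z2) * star U := fun Z1 Z2 => by
        rw [Matrix.mul_add, Matrix.add_mul]
      have hsmul : ∀ Z : Matrix (Fin n) (Fin n) ℝ,
          (2:ℝ)⁻¹ • (U * Z * star U) = U * ((2:ℝ)⁻¹ • Z) * star U := fun Z => by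
        rw [Matrix.mul_smul, Matrix.smul_mul]
      rw [hadd, hsmul]
      congr 1
      congr 1
      ext a b
      simp only [Matrix.smul_apply, Matrix.add_apply, Matrix.diagonal_mul, Matrix.mul_diagonal,
        Matrix.of_apply, smul_eq_mul]
      rw [hc]
      dsimp only
      ring
  set B : Matrix (Fin n) (Fin n) ℝ := Matrix.of (fun a b : Fin n =>
    if d a = 0 ∧ d b = 0 then (1:ℝ) else 2 * d a * d b / (d a ^ 2 + d b ^ 2)) with hB
  have hBpsd : B.PosSemidef := B_posSemidef d
  set S : Matrix (Fin n) (Fin n) ℝ := Matrix.of (fun a b => B a b ^ k) with hS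
  have hSqf : ∀ v, 0 ≤ QF S v := by
    intro v
    have h := qf_pow_nonneg hBpsd k v
    simpa [QF, hS] using h
  have hSsym : ∀ a b, S a b = S b a := by
    intro a b
    simp only [hS, Matrix.of_apply, hB]
    congr 1
    rcases em (d a = 0) with ha | ha <;> rcases em (d b = 0) with hb | hb
    · simp [ha, hb]
    · rw [if_neg (by tauto), if_neg (by tauto)]; ring
    · rw [if_neg (by tauto), if_neg (by tauto)]; ring
    · rw [if_neg (by tauto), if_neg (by tauto)]; ring
  have hSdiag : ∀ a, S a a = 1 := by
    intro a
    simp only [hS, Matrix.of_apply, hB]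
    by_cases ha : d a = 0
    · rw [if_pos ⟨ha, ha⟩, one_pow]
    · rw [if_neg (by tauto)]
      have h2 : d a ^ 2 + d a ^ 2 ≠ 0 := by positivity
      rw [show 2 * d a * d a / (d a ^ 2 + d a ^ 2) = 1 by field_simp; ring, one_pow]
  have hSN : ∀ a b, (diagonal (fun i => d i ^ k) * X' * diagonal (fun i => d i ^ k)) a b
      = S a b * (Matrix.of (fun a b => c a b ^ k * X' a b)) a b := by
    intro a b
    rw [Matrix.mul_diagonal, Matrix.diagonal_mul]
    simp only [hS, hB, hc, Matrix.of_apply]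
    by_cases hz : d a = 0 ∧ d b = 0
    · rw [if_pos hz]
      obtain ⟨h1, h2⟩ := hz
      rw [h1, h2]
      simp [zero_pow hk.ne']
    · rw [if_neg hz]
      have hpos : (0:ℝ) < d a ^ 2 + d b ^ 2 := by
        rcases not_and_or.mp hz with h | h
        · have : 0 < d a ^ 2 := by positivity
          nlinarith [sq_nonneg (d b)]
        · have : 0 < d b ^ 2 := by positivity
          nlinarith [sq_nonneg (d a)]
      rw [div_pow, div_pow]
      field_simp
      ring
  refine ⟨hM, hNh k, ?_⟩
  exact maj_of_frame U S (diagonal (fun i => d i ^ k) * X' * diagonal (fun i => d i ^ k))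
    (Matrix.of (fun a b => c a b ^ k * X' a b)) (A ^ k * X * A ^ k) (L^[k] X)
    hU1 hU2 hSsym hSdiag hSqf hSN hMc (hNc k) hM (hNh k)
end

section
/- For all n×n real symmetric matrices A and X, the matrix AXA is majorized by (A²X + XA²)/2. -/
open Matrix

section Helpers
open Matrix
set_option linter.unusedSectionVars false

variable {m : Type*} [Fintype m] [DecidableEq m]

lemma real_spectral_s7 {H : Matrix m m ℝ} (hH : H.IsHermitian) :
    H = (hH.eigenvectorUnitary : Matrix m m ℝ) * diagonal hH.eigenvalues *
      (hH.eigenvectorUnitary : Matrix m m ℝ)ᴴ := by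
  have := hH.spectral_theorem
  rwa [RCLike.ofReal_real_eq_id, Function.id_comp] at this

lemma unit_star_mul {H : Matrix m m ℝ} (hH : H.IsHermitian) :
    (hH.eigenvectorUnitary : Matrix m m ℝ)ᴴ * (hH.eigenvectorUnitary : Matrix m m ℝ) = 1 := by
  rw [← Matrix.star_eq_conjTranspose]
  exact (Matrix.mem_unitaryGroup_iff').mp (hH.eigenvectorUnitary).2

lemma unit_mul_star {H : Matrix m m ℝ} (hH : H.IsHermitian) :
    (hH.eigenvectorUnitary : Matrix m m ℝ) * (hH.eigenvectorUnitary : Matrix m m ℝ)ᴴ = 1 := by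
  rw [← Matrix.star_eq_conjTranspose]
  exact (Matrix.mem_unitaryGroup_iff).mp (hH.eigenvectorUnitary).2

lemma trace_eq_sum_eigs_s7 {H : Matrix m m ℝ} (hH : H.IsHermitian) :
    H.trace = ∑ i, hH.eigenvalues i := by
  conv_lhs => rw [real_spectral_s7 hH]
  rw [trace_mul_cycle, unit_star_mul hH, one_mul, trace_diagonal]

lemma psd_diag_nonneg_s7 {Z : Matrix m m ℝ} (hZ : Z.PosSemidef) (i : m) : 0 ≤ Z i i := by
  have := hZ.dotProduct_mulVec_nonneg (Pi.single i 1)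
  simpa [dotProduct, mulVec, Pi.single_apply, Finset.sum_ite_eq, Finset.sum_ite_eq'] using this

lemma entry_spectral {H : Matrix m m ℝ} (hH : H.IsHermitian) (i j : m) :
    H i j = ∑ k, hH.eigenvalues k * ((hH.eigenvectorUnitary : Matrix m m ℝ) i k *
      (hH.eigenvectorUnitary : Matrix m m ℝ) j k) := by
  conv_lhs => rw [real_spectral_s7 hH]
  rw [mul_apply]
  refine Finset.sum_congr rfl fun k _ => ?_
  rw [mul_diagonal, conjTranspose_apply]
  simp [mul_comm, mul_assoc, mul_left_comm]

/-- Schur product theorem over ℝ. -/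
lemma schur_product {A B : Matrix m m ℝ} (hA : A.PosSemidef) (hB : B.PosSemidef) :
    (Matrix.of fun i j => A i j * B i j).PosSemidef := by
  refine PosSemidef.of_dotProduct_mulVec_nonneg ?_ ?_
  · ext i j
    simp only [conjTranspose_apply, of_apply, star_trivial]
    rw [show A j i = A i j from hA.1.apply j i ▸ by simp [conjTranspose_apply],
        show B j i = B i j from hB.1.apply j i ▸ by simp [conjTranspose_apply]]
  · intro x
    set ev : m → ℝ := hB.1.eigenvalues with hev
    set V : Matrix m m ℝ := (hB.1.eigenvectorUnitary : Matrix m m ℝ) with hV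
    have hBij : ∀ i j, B i j = ∑ k, ev k * (V i k * V j k) := entry_spectral hB.1
    have key : (star x) ⬝ᵥ ((Matrix.of fun i j => A i j * B i j) *ᵥ x)
        = ∑ k, ev k * ((star fun i => x i * V i k) ⬝ᵥ (A *ᵥ fun i => x i * V i k)) := by
      calc (star x) ⬝ᵥ ((Matrix.of fun i j => A i j * B i j) *ᵥ x)
          = ∑ i, ∑ j, ∑ k, x i * (A i j * (ev k * (V i k * V j k)) * x j) := by
            simp only [dotProduct, mulVec, of_apply, Pi.star_apply, star_trivial]
            refine Finset.sum_congr rfl fun i _ => ?_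
            rw [Finset.mul_sum]
            refine Finset.sum_congr rfl fun j _ => ?_
            rw [hBij i j, Finset.mul_sum, Finset.sum_mul, Finset.mul_sum]
        _ = ∑ i, ∑ k, ∑ j, x i * (A i j * (ev k * (V i k * V j k)) * x j) := by
            exact Finset.sum_congr rfl fun i _ => Finset.sum_comm
        _ = ∑ k, ∑ i, ∑ j, x i * (A i j * (ev k * (V i k * V j k)) * x j) :=
            Finset.sum_comm
        _ = ∑ k, ev k * ((star fun i => x i * V i k) ⬝ᵥ (A *ᵥ fun i => x i * V i k)) := by
            refine Finset.sum_congr rfl fun k _ => ?_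
            simp only [dotProduct, mulVec, Pi.star_apply, star_trivial, Finset.mul_sum]
            refine Finset.sum_congr rfl fun i _ => Finset.sum_congr rfl fun j _ => ?_
            ring
    rw [key]
    refine Finset.sum_nonneg fun k _ => mul_nonneg ?_ (hA.dotProduct_mulVec_nonneg _)
    exact hB.eigenvalues_nonneg k

noncomputable def Cmat (a : m → ℝ) : Matrix m m ℝ :=
  Matrix.of fun i j => if a i = 0 ∧ a j = 0 then 1 else 2 * a i * a j / (a i ^ 2 + a j ^ 2)

lemma Cmat_symm (a : m → ℝ) (i j : m) : Cmat a i j = Cmat a j i := by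
  unfold Cmat
  simp only [of_apply]
  exact if_congr and_comm rfl (by ring)

lemma Cmat_herm (a : m → ℝ) : (Cmat a).IsHermitian := by
  ext i j
  simp only [conjTranspose_apply, star_trivial]
  exact Cmat_symm a j i

lemma Cmat_diag (a : m → ℝ) (i : m) : Cmat a i i = 1 := by
  unfold Cmat
  simp only [of_apply]
  split_ifs with h
  · rfl
  · have ha : a i ≠ 0 := fun h' => h ⟨h', h'⟩
    field_simp
    ring

lemma Cmat_mul_s (a : m → ℝ) (i j : m) :
    (a i ^ 2 + a j ^ 2) * Cmat a i j = 2 * a i * a j := by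
  unfold Cmat
  simp only [of_apply]
  split_ifs with h
  · rw [h.1, h.2]; ring
  · have hs : a i ^ 2 + a j ^ 2 ≠ 0 := by
      intro h0
      have h1 : a i ^ 2 = 0 ∧ a j ^ 2 = 0 := by
        constructor <;> nlinarith [sq_nonneg (a i), sq_nonneg (a j)]
      exact h ⟨pow_eq_zero_iff (n := 2) (by norm_num) |>.1 h1.1,
        pow_eq_zero_iff (n := 2) (by norm_num) |>.1 h1.2⟩
    field_simp

lemma Cmat_posSemidef (a : m → ℝ) : (Cmat a).PosSemidef := by
  have hC : (Cmat a).IsHermitian := Cmat_herm a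
  refine hC.posSemidef_iff_eigenvalues_nonneg.mpr (fun r => ?_ : ∀ r, 0 ≤ hC.eigenvalues r)
  set μ := hC.eigenvalues r with hμ
  set v : m → ℝ := ⇑(hC.eigenvectorBasis r) with hv
  have heig : Cmat a *ᵥ v = μ • v := by
    have := hC.mulVec_eigenvectorBasis r
    simpa [hv, hμ] using this
  have hvnorm : ‖hC.eigenvectorBasis r‖ = 1 := hC.eigenvectorBasis.orthonormal.1 r
  have hvne : v ≠ 0 := by
    intro h0
    have : hC.eigenvectorBasis r = 0 := by
      ext i
      exact congrFun h0 i
    rw [this] at hvnorm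
    simp at hvnorm
  have hquad : ∀ w : m → ℝ, ∑ i, w i * (Cmat a *ᵥ w) i = ∑ i, ∑ j, Cmat a i j * w i * w j := by
    intro w
    refine Finset.sum_congr rfl fun i _ => ?_
    simp only [mulVec, dotProduct, Finset.mul_sum, Finset.sum_mul]
    exact Finset.sum_congr rfl fun j _ => by ring
  have hlyap : μ * ∑ i, a i ^ 2 * v i ^ 2 = (∑ i, a i * v i) ^ 2 := by
    have h1 : ∑ i, ∑ j, (a i ^ 2 + a j ^ 2) * Cmat a i j * v i * v j
        = 2 * (∑ i, a i * v i) ^ 2 := by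
      have : ∀ i j, (a i ^ 2 + a j ^ 2) * Cmat a i j * v i * v j
          = 2 * (a i * v i) * (a j * v j) := by
        intro i j; rw [Cmat_mul_s]; ring
      simp only [this]
      rw [sq, Finset.sum_mul_sum]
      simp only [Finset.mul_sum, Finset.sum_mul]
      exact Finset.sum_congr rfl fun i _ => Finset.sum_congr rfl fun j _ => by ring
    have h2 : ∑ i, ∑ j, (a i ^ 2 + a j ^ 2) * Cmat a i j * v i * v j
        = 2 * (μ * ∑ i, a i ^ 2 * v i ^ 2) := by
      have split : ∀ i j, (a i ^ 2 + a j ^ 2) * Cmat a i j * v i * v j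
          = a i ^ 2 * v i * (Cmat a i j * v j) + (Cmat a i j * v i) * (a j ^ 2 * v j) := by
        intro i j; ring
      simp only [split, Finset.sum_add_distrib]
      have hA : ∑ i, ∑ j, a i ^ 2 * v i * (Cmat a i j * v j)
          = μ * ∑ i, a i ^ 2 * v i ^ 2 := by
        have : ∀ i, ∑ j, a i ^ 2 * v i * (Cmat a i j * v j)
            = a i ^ 2 * v i * (μ * v i) := by
          intro i
          rw [← Finset.mul_sum]
          congr 1
          have := congrFun heig i
          simpa [mulVec, dotProduct] using this
        simp only [this]
        rw [Finset.mul_sum]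
        exact Finset.sum_congr rfl fun i _ => by ring
      have hB : ∑ i, ∑ j, (Cmat a i j * v i) * (a j ^ 2 * v j)
          = μ * ∑ i, a i ^ 2 * v i ^ 2 := by
        rw [Finset.sum_comm]
        have : ∀ j, ∑ i, (Cmat a i j * v i) * (a j ^ 2 * v j)
            = a j ^ 2 * v j * (μ * v j) := by
          intro j
          have hcol : ∑ i, Cmat a j i * v i = μ * v j := by
            have := congrFun heig j
            simpa [mulVec, dotProduct] using this
          calc ∑ i, (Cmat a i j * v i) * (a j ^ 2 * v j)
              = (∑ i, Cmat a j i * v i) * (a j ^ 2 * v j) := by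
                rw [Finset.sum_mul]
                exact Finset.sum_congr rfl fun i _ => by rw [Cmat_symm a j i]
            _ = a j ^ 2 * v j * (μ * v j) := by rw [hcol]; ring
        simp only [this]
        rw [Finset.mul_sum]
        exact Finset.sum_congr rfl fun j _ => by ring
      rw [hA, hB]; ring
    nlinarith [h1, h2]
  by_cases hD : ∑ i, a i ^ 2 * v i ^ 2 = 0
  · have hav : ∀ i, a i * v i = 0 := by
      intro i
      have hterm : ∀ i, (0:ℝ) ≤ a i ^ 2 * v i ^ 2 := fun i => by positivity
      have := (Finset.sum_eq_zero_iff_of_nonneg (fun i _ => hterm i)).1 hD i (Finset.mem_univ i)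
      nlinarith [this]
    set w : m → ℝ := fun i => if a i = 0 then v i else 0 with hw
    have hCvv : ∀ i j, Cmat a i j * v i * v j = w i * w j := by
      intro i j
      by_cases hi : a i = 0
      · by_cases hj : a j = 0
        · simp only [hw, hi, hj, if_pos]
          unfold Cmat
          simp [hi, hj]
        · have hvj : v j = 0 := by
            have := hav j
            rcases mul_eq_zero.1 this with h | h
            · exact absurd h hj
            · exact h
          simp [hw, hvj, hj]
      · have hvi : v i = 0 := by
          have := hav i
          rcases mul_eq_zero.1 this with h | h
          · exact absurd h hi
          · exact h
        simp [hw, hvi, hi]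
    have hquadv : μ * ∑ i, v i ^ 2 = (∑ i, w i) ^ 2 := by
      have lhs : ∑ i, v i * (Cmat a *ᵥ v) i = μ * ∑ i, v i ^ 2 := by
        rw [heig]
        simp only [Pi.smul_apply, smul_eq_mul]
        rw [Finset.mul_sum]
        exact Finset.sum_congr rfl fun i _ => by ring
      have rhs : ∑ i, v i * (Cmat a *ᵥ v) i = (∑ i, w i) ^ 2 := by
        rw [hquad v]
        have : ∀ i, ∑ j, Cmat a i j * v i * v j = ∑ j, w i * w j := by
          intro i
          exact Finset.sum_congr rfl fun j _ => hCvv i j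
        simp only [this]
        rw [sq, Finset.sum_mul_sum]
      rw [← lhs, rhs]
    have hvpos : 0 < ∑ i, v i ^ 2 := by
      rcases Function.ne_iff.1 hvne with ⟨i, hi⟩
      refine Finset.sum_pos' (fun i _ => by positivity) ⟨i, Finset.mem_univ i, ?_⟩
      have : v i ≠ 0 := hi
      positivity
    nlinarith [sq_nonneg (∑ i, w i), hquadv, hvpos]
  · have hDpos : 0 < ∑ i, a i ^ 2 * v i ^ 2 := by
      rcases lt_or_eq_of_le (Finset.sum_nonneg fun i _ => by positivity :
          (0:ℝ) ≤ ∑ i, a i ^ 2 * v i ^ 2) with h | h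
      · exact h
      · exact absurd h.symm hD
    nlinarith [sq_nonneg (∑ i, a i * v i), hlyap, hDpos]

/-- Selection lemma: a fractional 0-1 weighting is dominated by some subset of size `k`. -/
lemma my_comb {ι : Type*} [Fintype ι] [DecidableEq ι] (lam q : ι → ℝ) (k : ℕ)
    (hq0 : ∀ i, 0 ≤ q i) (hq1 : ∀ i, q i ≤ 1) (hsum : ∑ i, q i = k) :
    ∃ t : Finset ι, t.card = k ∧ ∑ i, lam i * q i ≤ ∑ i ∈ t, lam i := by
  classical
  have hkcard : k ≤ Fintype.card ι := by
    have : (k : ℝ) ≤ (Fintype.card ι : ℝ) := by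
      rw [← hsum]
      calc ∑ i, q i ≤ ∑ _i : ι, (1:ℝ) := Finset.sum_le_sum fun i _ => hq1 i
        _ = Fintype.card ι := by simp
    exact_mod_cast this
  rcases Nat.eq_zero_or_pos k with hk0 | hkpos
  · refine ⟨∅, by simp [hk0], ?_⟩
    have hq : ∀ i, q i = 0 := by
      intro i
      have h0 : ∑ i, q i = 0 := by rw [hsum, hk0]; simp
      have := (Finset.sum_eq_zero_iff_of_nonneg (fun i _ => hq0 i)).1 h0
      exact this i (Finset.mem_univ i)
    simp [hq]
  obtain ⟨t₀, _, ht₀⟩ := Finset.exists_subset_card_eq (s := (Finset.univ : Finset ι))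
    (by simpa using hkcard)
  set T : Finset (Finset ι) := Finset.univ.filter (fun t => t.card = k) with hT
  have hT0 : t₀ ∈ T := by simp [hT, ht₀]
  obtain ⟨t, htT, htmax⟩ := Finset.exists_max_image T (fun t => ∑ i ∈ t, lam i) ⟨t₀, hT0⟩
  have htk : t.card = k := by simpa [hT] using htT
  have htne : t.Nonempty := Finset.card_pos.1 (by omega)
  obtain ⟨i₀, hi₀t, hi₀min⟩ := Finset.exists_min_image t lam htne
  set c := lam i₀ with hc
  have hout : ∀ j, j ∉ t → lam j ≤ c := by
    intro j hj
    have hswap : (insert j (t.erase i₀)) ∈ T := by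
      have : (insert j (t.erase i₀)).card = k := by
        rw [Finset.card_insert_of_notMem (fun h => hj (Finset.mem_of_mem_erase h)),
          Finset.card_erase_of_mem hi₀t, htk]
        omega
      simp [hT, this]
    have := htmax _ hswap
    rw [Finset.sum_insert (fun h => hj (Finset.mem_of_mem_erase h)),
      Finset.sum_erase_eq_sub hi₀t] at this
    linarith
  refine ⟨t, htk, ?_⟩
  have key : ∑ i, (lam i - c) * q i ≤ ∑ i ∈ t, (lam i - c) := by
    rw [← Finset.sum_add_sum_compl t]
    have h1 : ∑ i ∈ t, (lam i - c) * q i ≤ ∑ i ∈ t, (lam i - c) := by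
      refine Finset.sum_le_sum fun i hi => ?_
      have h := hi₀min i hi
      nlinarith [hq0 i, hq1 i]
    have h2 : ∑ i ∈ tᶜ, (lam i - c) * q i ≤ 0 := by
      refine Finset.sum_nonpos fun i hi => ?_
      have h := hout i (by simpa using hi)
      nlinarith [hq0 i]
    linarith
  have expand : ∑ i, lam i * q i = ∑ i, (lam i - c) * q i + c * k := by
    rw [← hsum, Finset.mul_sum, ← Finset.sum_add_distrib]
    congr 1; ext i; ring
  have expand2 : ∑ i ∈ t, (lam i - c) = ∑ i ∈ t, lam i - c * k := by
    rw [Finset.sum_sub_distrib]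
    simp [htk, mul_comm]
  linarith

/-- Ky Fan upper bound: `tr (H Z) ≤` a sum of `k` eigenvalues of `H`,
for `0 ≤ Z ≤ 1` with trace `k`. -/
lemma kyfan_upper {H Z : Matrix m m ℝ} (hH : H.IsHermitian) (hZ : Z.PosSemidef)
    (hZ1 : ((1 : Matrix m m ℝ) - Z).PosSemidef) (k : ℕ) (htr : Z.trace = (k : ℝ)) :
    ∃ t : Finset m, t.card = k ∧ (H * Z).trace ≤ ∑ i ∈ t, hH.eigenvalues i := by
  set V : Matrix m m ℝ := (hH.eigenvectorUnitary : Matrix m m ℝ) with hV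
  set W : Matrix m m ℝ := Vᴴ * Z * V with hW
  have hWpsd : W.PosSemidef := hZ.conjTranspose_mul_mul_same V
  have hW1 : (1 : Matrix m m ℝ) - W = Vᴴ * ((1 : Matrix m m ℝ) - Z) * V := by
    rw [Matrix.mul_sub, Matrix.sub_mul, Matrix.mul_one, unit_star_mul hH, hW]
  have hW1psd : ((1 : Matrix m m ℝ) - W).PosSemidef := by
    rw [hW1]; exact hZ1.conjTranspose_mul_mul_same V
  set q : m → ℝ := fun i => W i i with hq
  have hq0 : ∀ i, 0 ≤ q i := fun i => psd_diag_nonneg_s7 hWpsd i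
  have hq1 : ∀ i, q i ≤ 1 := by
    intro i
    have := psd_diag_nonneg_s7 hW1psd i
    simp only [Matrix.sub_apply, Matrix.one_apply_eq] at this
    linarith
  have hqsum : ∑ i, q i = (k : ℝ) := by
    have h0 : ∑ i, q i = W.trace := by simp [Matrix.trace, Matrix.diag, hq]
    rw [h0, hW, Matrix.trace_mul_cycle, unit_mul_star hH, Matrix.one_mul, htr]
  have htrace : (H * Z).trace = ∑ i, hH.eigenvalues i * q i := by
    conv_lhs => rw [real_spectral_s7 hH]
    rw [Matrix.mul_assoc, Matrix.mul_assoc, Matrix.trace_mul_comm, Matrix.mul_assoc, ← hW,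
      Matrix.trace]
    simp only [Matrix.diag, Matrix.diagonal_mul, hq]
  obtain ⟨t, htk, hle⟩ := my_comb hH.eigenvalues q k hq0 hq1 hqsum
  exact ⟨t, htk, by rw [htrace]; exact hle⟩

/-- Ky Fan lower: any partial sum of eigenvalues is `tr (H P)` for a suitable `0 ≤ P ≤ 1`. -/
lemma kyfan_lower {H : Matrix m m ℝ} (hH : H.IsHermitian) (s : Finset m) :
    ∃ P : Matrix m m ℝ, P.PosSemidef ∧ ((1 : Matrix m m ℝ) - P).PosSemidef ∧
      P.trace = (s.card : ℝ) ∧ ∑ i ∈ s, hH.eigenvalues i = (H * P).trace := by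
  classical
  set V : Matrix m m ℝ := (hH.eigenvectorUnitary : Matrix m m ℝ) with hV
  set d : m → ℝ := fun i => if i ∈ s then 1 else 0 with hd
  refine ⟨V * diagonal d * Vᴴ, ?_, ?_, ?_, ?_⟩
  · exact (PosSemidef.diagonal
      (by intro i; by_cases h : i ∈ s <;> simp [hd, h])).mul_mul_conjTranspose_same V
  · have h1 : (1 : Matrix m m ℝ) - V * diagonal d * Vᴴ
        = V * diagonal (fun i => 1 - d i) * Vᴴ := by
      have h2 : diagonal (fun i => (1:ℝ) - d i) = 1 - diagonal d := by
        rw [← diagonal_one, diagonal_sub]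
      rw [h2, Matrix.mul_sub, Matrix.sub_mul, Matrix.mul_one, unit_mul_star hH]
    rw [h1]
    exact (PosSemidef.diagonal
      (by intro i; by_cases h : i ∈ s <;> simp [hd, h])).mul_mul_conjTranspose_same V
  · rw [Matrix.trace_mul_cycle, unit_star_mul hH, Matrix.one_mul, trace_diagonal]
    simp [hd]
  · conv_rhs => rw [real_spectral_s7 hH]
    have assoc : (V * diagonal hH.eigenvalues * Vᴴ) * (V * diagonal d * Vᴴ)
        = V * ((diagonal hH.eigenvalues * (Vᴴ * V)) * diagonal d) * Vᴴ := by
      simp only [Matrix.mul_assoc]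
    rw [assoc, unit_star_mul hH, Matrix.mul_one, diagonal_mul_diagonal,
      Matrix.trace_mul_cycle, unit_star_mul hH, Matrix.one_mul, trace_diagonal]
    simp [hd, mul_ite, Finset.sum_ite_mem]

end Helpers

/-- For all real symmetric matrices `A` and `X`, the matrix `A * X * A` is majorized by
`(A²X + XA²)/2`. -/
theorem quadratic_majorized_lyapunov {n : ℕ}
    (A X : Matrix (Fin n) (Fin n) ℝ) (hA : A.IsHermitian) (hX : X.IsHermitian) :
    MatMajorizedBy (A * X * A) ((2 : ℝ)⁻¹ • (A ^ 2 * X + X * A ^ 2)) := by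
  classical
  set M : Matrix (Fin n) (Fin n) ℝ := A * X * A with hMdef
  set Y : Matrix (Fin n) (Fin n) ℝ := (2 : ℝ)⁻¹ • (A ^ 2 * X + X * A ^ 2) with hYdef
  have hA2 : (A ^ 2).IsHermitian := hA.pow 2
  have hM : M.IsHermitian := by
    show Mᴴ = M
    rw [hMdef, conjTranspose_mul, conjTranspose_mul, hA.eq, hX.eq, Matrix.mul_assoc]
  have hY : Y.IsHermitian := by
    show Yᴴ = Y
    rw [hYdef, conjTranspose_smul, conjTranspose_add, conjTranspose_mul, conjTranspose_mul,
      hA2.eq, hX.eq]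
    simp only [star_trivial]
    rw [add_comm]
  clear_value M Y
  refine ⟨hM, hY, ?_, ?_⟩
  · -- the Ky Fan inequalities
    intro s
    set U : Matrix (Fin n) (Fin n) ℝ := (hA.eigenvectorUnitary : Matrix (Fin n) (Fin n) ℝ)
      with hU
    set a : Fin n → ℝ := hA.eigenvalues with ha
    have hUU : U * Uᴴ = 1 := unit_mul_star hA
    have hU'U : Uᴴ * U = 1 := unit_star_mul hA
    have hAd : Uᴴ * A * U = diagonal a := by
      conv_lhs => rw [real_spectral_s7 hA, ← hU, ← ha]
      calc Uᴴ * (U * diagonal a * Uᴴ) * U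
          = (Uᴴ * U) * diagonal a * (Uᴴ * U) := by simp only [Matrix.mul_assoc]
        _ = diagonal a := by rw [hU'U, Matrix.one_mul, Matrix.mul_one]
    have hA2d : Uᴴ * A ^ 2 * U = diagonal (fun i => a i ^ 2) := by
      have : Uᴴ * A ^ 2 * U = (Uᴴ * A * U) * (Uᴴ * A * U) := by
        calc Uᴴ * A ^ 2 * U = Uᴴ * (A * ((U * Uᴴ) * A)) * U := by
              rw [hUU, Matrix.one_mul, pow_two]
          _ = (Uᴴ * A * U) * (Uᴴ * A * U) := by simp only [Matrix.mul_assoc]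
      rw [this, hAd, diagonal_mul_diagonal]
      have h : (fun i => a i * a i) = fun i => a i ^ 2 := funext fun i => (sq (a i)).symm
      rw [h]
    clear_value U a
    set X' : Matrix (Fin n) (Fin n) ℝ := Uᴴ * X * U with hX'
    set M' : Matrix (Fin n) (Fin n) ℝ := Uᴴ * M * U with hM'
    set Y' : Matrix (Fin n) (Fin n) ℝ := Uᴴ * Y * U with hY'
    clear_value X' M' Y'
    have hM'diag : M' = diagonal a * X' * diagonal a := by
      rw [hM', hMdef, ← hAd, hX']
      calc Uᴴ * (A * X * A) * U
          = Uᴴ * (A * ((U * Uᴴ) * (X * ((U * Uᴴ) * A)))) * U := by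
            rw [hUU]
            simp only [Matrix.one_mul]
            simp only [Matrix.mul_assoc]
        _ = (Uᴴ * A * U) * (Uᴴ * X * U) * (Uᴴ * A * U) := by simp only [Matrix.mul_assoc]
    have hY'diag : Y' = (2 : ℝ)⁻¹ • (diagonal (fun i => a i ^ 2) * X'
        + X' * diagonal (fun i => a i ^ 2)) := by
      have e1 : Uᴴ * (A ^ 2 * X) * U = (Uᴴ * A ^ 2 * U) * (Uᴴ * X * U) :=
        calc Uᴴ * (A ^ 2 * X) * U
            = Uᴴ * (A ^ 2 * ((U * Uᴴ) * X)) * U := by rw [hUU, Matrix.one_mul]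
          _ = (Uᴴ * A ^ 2 * U) * (Uᴴ * X * U) := by simp only [Matrix.mul_assoc]
      have e2 : Uᴴ * (X * A ^ 2) * U = (Uᴴ * X * U) * (Uᴴ * A ^ 2 * U) :=
        calc Uᴴ * (X * A ^ 2) * U
            = Uᴴ * (X * ((U * Uᴴ) * A ^ 2)) * U := by rw [hUU, Matrix.one_mul]
          _ = (Uᴴ * X * U) * (Uᴴ * A ^ 2 * U) := by simp only [Matrix.mul_assoc]
      rw [hY', hYdef, Matrix.mul_smul, Matrix.smul_mul, Matrix.mul_add, Matrix.add_mul, e1, e2,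
        hA2d, ← hX']
    have hMentry : ∀ i j, M' i j = a i * X' i j * a j := by
      intro i j
      rw [hM'diag, mul_diagonal, diagonal_mul]
    have hYentry : ∀ i j, Y' i j = (2 : ℝ)⁻¹ * (a i ^ 2 * X' i j + X' i j * a j ^ 2) := by
      intro i j
      rw [hY'diag]
      simp only [Matrix.smul_apply, Matrix.add_apply, diagonal_mul, mul_diagonal, smul_eq_mul]
    have hkey : ∀ i j, M' i j = Cmat a i j * Y' i j := by
      intro i j
      rw [hMentry i j, hYentry i j]
      linear_combination (-(2 : ℝ)⁻¹ * X' i j) * (Cmat_mul_s a i j)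
    obtain ⟨P, hPpsd, hP1psd, hPtr, hPsum⟩ := kyfan_lower hM s
    set P' : Matrix (Fin n) (Fin n) ℝ := Uᴴ * P * U with hP'
    clear_value P'
    have hP'psd : P'.PosSemidef := by rw [hP']; exact hPpsd.conjTranspose_mul_mul_same U
    have hP'1 : (1 : Matrix (Fin n) (Fin n) ℝ) - P' = Uᴴ * ((1 : Matrix (Fin n) (Fin n) ℝ) - P) * U := by
      rw [Matrix.mul_sub, Matrix.sub_mul, Matrix.mul_one, hU'U, hP']
    have hP'1psd : ((1 : Matrix (Fin n) (Fin n) ℝ) - P').PosSemidef := by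
      rw [hP'1]; exact hP1psd.conjTranspose_mul_mul_same U
    set W : Matrix (Fin n) (Fin n) ℝ := Matrix.of fun i j => Cmat a i j * P' i j with hW
    clear_value W
    have hWpsd : W.PosSemidef := by rw [hW]; exact schur_product (Cmat_posSemidef a) hP'psd
    have hW1 : (1 : Matrix (Fin n) (Fin n) ℝ) - W
        = Matrix.of fun i j => Cmat a i j * ((1 : Matrix (Fin n) (Fin n) ℝ) - P') i j := by
      ext i j
      simp only [Matrix.sub_apply, Matrix.of_apply, hW]
      by_cases hij : i = j
      · subst hij
        rw [Cmat_diag, Matrix.one_apply_eq]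
        ring
      · rw [Matrix.one_apply_ne hij]
        ring
    have hW1psd : ((1 : Matrix (Fin n) (Fin n) ℝ) - W).PosSemidef := by
      rw [hW1]; exact schur_product (Cmat_posSemidef a) hP'1psd
    have hWtr : W.trace = (s.card : ℝ) := by
      have h1 : W.trace = P'.trace := by
        rw [Matrix.trace, Matrix.trace]
        refine Finset.sum_congr rfl fun i _ => ?_
        simp only [Matrix.diag, hW, Matrix.of_apply, Cmat_diag, one_mul]
      have h2 : P'.trace = P.trace := by
        rw [hP', Matrix.trace_mul_cycle, hUU, Matrix.one_mul]
      rw [h1, h2, hPtr]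
    set Z : Matrix (Fin n) (Fin n) ℝ := U * W * Uᴴ with hZ
    clear_value Z
    have hZpsd : Z.PosSemidef := by rw [hZ]; exact hWpsd.mul_mul_conjTranspose_same U
    have hZ1 : (1 : Matrix (Fin n) (Fin n) ℝ) - Z
        = U * ((1 : Matrix (Fin n) (Fin n) ℝ) - W) * Uᴴ := by
      rw [Matrix.mul_sub, Matrix.sub_mul, Matrix.mul_one, hUU, hZ]
    have hZ1psd : ((1 : Matrix (Fin n) (Fin n) ℝ) - Z).PosSemidef := by
      rw [hZ1]; exact hW1psd.mul_mul_conjTranspose_same U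
    have hZtr : Z.trace = (s.card : ℝ) := by
      rw [hZ, Matrix.trace_mul_cycle, hU'U, Matrix.one_mul, hWtr]
    -- the chain of traces
    have chain1 : (M * P).trace = (M' * P').trace := by
      have h : M' * P' = Uᴴ * (M * P) * U := by
        calc M' * P' = Uᴴ * (M * ((U * Uᴴ) * P)) * U := by
              rw [hM', hP']
              simp only [Matrix.mul_assoc]
          _ = Uᴴ * (M * P) * U := by rw [hUU, Matrix.one_mul]
      rw [h, Matrix.trace_mul_cycle, hUU, Matrix.one_mul]
    have chain2 : (M' * P').trace = (Y' * W).trace := by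
      rw [Matrix.trace, Matrix.trace]
      simp only [Matrix.diag, Matrix.mul_apply, hW, Matrix.of_apply]
      refine Finset.sum_congr rfl fun i _ => Finset.sum_congr rfl fun j _ => ?_
      rw [hkey i j, Cmat_symm a j i]
      ring
    have chain3 : (Y' * W).trace = (Y * Z).trace := by
      have h1 : Y * Z = (Y * (U * W)) * Uᴴ := by
        rw [hZ]; simp only [Matrix.mul_assoc]
      have h2 : Y' * W = Uᴴ * (Y * (U * W)) := by
        rw [hY']; simp only [Matrix.mul_assoc]
      rw [h1, h2, Matrix.trace_mul_comm]
    obtain ⟨t, htcard, hle⟩ := kyfan_upper hY hZpsd hZ1psd s.card hZtr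
    refine ⟨t, htcard, ?_⟩
    calc ∑ i ∈ s, hM.eigenvalues i = (M * P).trace := hPsum
      _ = (Y * Z).trace := by rw [chain1, chain2, chain3]
      _ ≤ ∑ i ∈ t, hY.eigenvalues i := hle
  · -- equality of traces
    rw [← trace_eq_sum_eigs_s7 hM, ← trace_eq_sum_eigs_s7 hY]
    rw [hMdef, hYdef, Matrix.trace_smul, Matrix.trace_add, Matrix.trace_mul_comm X (A ^ 2)]
    have h1 : (A * X * A).trace = (A ^ 2 * X).trace := by
      rw [Matrix.trace_mul_cycle, pow_two]
    rw [h1, smul_eq_mul]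
    ring
end
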